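/- Let G be an n-sum of connected multigraphs K and H along an n-element vertex set U (n ≥ 1), let x be a real number, and let D = (d_{AB}) be any real matrix indexed by Γ(U) satisfying L_n(x) · D · L_n(x) = L_n(x). Then T(G;x,1) = Σ_{A,B ∈ Γ(U)} d_{AB} · T(K/A;x,1) · T(H/B;x,1). -/
import Mathlib


attribute [local instance] Classical.propDecidable

/-- A multigraph: a finite vertex type, a finite edge index type, and an endpoint
map sending each edge to an unordered pair of vertices. -/
structure Multigraph where
  V : Type
  E : Type
  [finV : Fintype V]
  [finE : Fintype E]
  ends : E → Sym2 V

attribute [instance] Multigraph.finV Multigraph.finE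

namespace Multigraph

/-- Two vertices are related if some edge of `S` has them as its endpoints. -/
def rel (G : Multigraph) (S : Finset G.E) (v w : G.V) : Prop :=
  ∃ e ∈ S, G.ends e = s(v, w)

/-- `ω(S)`: the number of connected components of the spanning subgraph `(V(G), S)`. -/
noncomputable def omega (G : Multigraph) (S : Finset G.E) : ℕ :=
  Nat.card (Quotient (Relation.EqvGen.setoid (G.rel S)))

/-- `ω(G)`: the number of connected components of `G`. -/
noncomputable def omegaG (G : Multigraph) : ℕ :=
  G.omega Finset.univ

/-- The Negami polynomial `f(G;t,x,y)`. -/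
noncomputable def negami (G : Multigraph) (t x y : ℝ) : ℝ :=
  ∑ S : Finset G.E, t ^ G.omega S * x ^ S.card * y ^ (Fintype.card G.E - S.card)

/-- The Tutte polynomial `T(G;x,y)`. -/
noncomputable def tutte (G : Multigraph) (x y : ℝ) : ℝ :=
  ∑ S : Finset G.E,
    (x - 1) ^ (G.omega S - G.omegaG) *
      (y - 1) ^ (G.omega S + S.card - Fintype.card G.V)

end Multigraph

/-- The setoid on `V` extending a setoid `A` on the subset `U`: its nontrivial
classes are exactly the blocks of `A`. -/
def extendSetoid {V : Type} (U : Set V) (A : Setoid U) : Setoid V where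
  r v w := v = w ∨ ∃ (hv : v ∈ U) (hw : w ∈ U), A.r ⟨v, hv⟩ ⟨w, hw⟩
  iseqv := by
    constructor
    · exact fun v => Or.inl rfl
    · rintro v w (rfl | ⟨hv, hw, h⟩)
      · exact Or.inl rfl
      · exact Or.inr ⟨hw, hv, A.symm h⟩
    · rintro v w z (rfl | ⟨hv, hw, h⟩) (rfl | ⟨hw', hz, h'⟩)
      · exact Or.inl rfl
      · exact Or.inr ⟨hw', hz, h'⟩
      · exact Or.inr ⟨hv, hw, h⟩
      · exact Or.inr ⟨hv, hz, A.trans h h'⟩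

namespace Multigraph

/-- The contraction `K/A` of a multigraph `K` by a partition `A` of a subset `U` of
its vertices: all vertices in a common block of `A` are identified. -/
noncomputable def contract (K : Multigraph) {U : Set K.V} (A : Setoid U) : Multigraph where
  V := Quotient (extendSetoid U A)
  E := K.E
  finV := Fintype.ofFinite _
  finE := K.finE
  ends e := (K.ends e).map (Quotient.mk (extendSetoid U A))

/-- `P(S)`: the partition of `U` in which two vertices lie in the same block iff they
lie in the same connected component of the spanning subgraph `(V(K), S)`. -/
def part (K : Multigraph) (U : Set K.V) (S : Finset K.E) : Setoid U :=
  Setoid.comap Subtype.val (Relation.EqvGen.setoid (K.rel S))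

/-- The auxiliary Negami polynomial `f_A(K;t,x,y)`. -/
noncomputable def negamiAux (K : Multigraph) (U : Set K.V) (A : Setoid U) (t x y : ℝ) : ℝ :=
  ∑ S : Finset K.E,
    if K.part U S = A then
      t ^ (K.omega S - Nat.card (Quotient A)) * x ^ S.card *
        y ^ (Fintype.card K.E - S.card)
    else 0

/-- The auxiliary Tutte polynomial `T_A(K;x,y)`. -/
noncomputable def tutteAux (K : Multigraph) (U : Set K.V) (A : Setoid U) (x y : ℝ) : ℝ :=
  ∑ S : Finset K.E,
    if K.part U S = A then
      (x - 1) ^ (K.omega S - Nat.card (Quotient A)) *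
        (y - 1) ^ (K.omega S + S.card - Fintype.card K.V)
    else 0

end Multigraph

/-- The set of partitions of a finite type is finite. -/
instance setoidFinite {α : Type} [Finite α] : Finite (Setoid α) :=
  Finite.of_injective (fun s : Setoid α => s.r) fun a b h => by
    cases a; cases b; simp only at h; subst h; rfl

noncomputable instance setoidFintype {α : Type} [Finite α] : Fintype (Setoid α) :=
  Fintype.ofFinite _

/-- The number of blocks `|A|` of a partition (setoid) `A`. -/
noncomputable def nblocks {α : Type} (A : Setoid α) : ℕ :=
  Nat.card (Quotient A)

/-- The matrix `T_n(t)` indexed by partitions of `α`, with `(A,B)`-entry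
`t^{|A∧B|}` where `A∧B` is the finest common coarsening (the join `A ⊔ B`). -/
noncomputable def Tmat (α : Type) [Finite α] (t : ℝ) :
    Matrix (Setoid α) (Setoid α) ℝ :=
  Matrix.of fun A B => t ^ nblocks (A ⊔ B)

/-- The matrix `L_n(x)` indexed by partitions of `α`, with `(A,B)`-entry
`(x-1)^{|A∧B|-1}` if `|A∧B| + n = |A| + |B|` and `0` otherwise. -/
noncomputable def Lmat (α : Type) [Finite α] (n : ℕ) (x : ℝ) :
    Matrix (Setoid α) (Setoid α) ℝ :=
  Matrix.of fun A B =>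
    if nblocks (A ⊔ B) + n = nblocks A + nblocks B then
      (x - 1) ^ (nblocks (A ⊔ B) - 1)
    else 0

/-- The connectivity matrix `A_n` indexed by partitions of `α`, with `(A,B)`-entry
`1` if `|A∧B| = 1` and `0` otherwise. -/
noncomputable def Amat (α : Type) [Finite α] :
    Matrix (Setoid α) (Setoid α) ℝ :=
  Matrix.of fun A B => if nblocks (A ⊔ B) = 1 then (1 : ℝ) else 0

/-- `G` is an `n`-sum of `K` and `H` along `U`: `V(G) = V(K) ∪ V(H)`,
`V(K) ∩ V(H) = U`, and `E(G)` is the disjoint union of `E(K)` and `E(H)` with the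
inherited endpoint maps. -/
structure NSum (G K H : Multigraph) (U : Set G.V) where
  ιK : K.V → G.V
  ιH : H.V → G.V
  injK : Function.Injective ιK
  injH : Function.Injective ιH
  cover : Set.range ιK ∪ Set.range ιH = Set.univ
  inter : Set.range ιK ∩ Set.range ιH = U
  edgeEquiv : G.E ≃ K.E ⊕ H.E
  endsK : ∀ a, G.ends (edgeEquiv.symm (Sum.inl a)) = (K.ends a).map ιK
  endsH : ∀ a, G.ends (edgeEquiv.symm (Sum.inr a)) = (H.ends a).map ιH

namespace NSum

variable {G K H : Multigraph} {U : Set G.V}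

/-- The copy of a partition `A` of `U` on the corresponding subset of `V(K)`. -/
def pullK (σ : NSum G K H U) (A : Setoid U) : Setoid (σ.ιK ⁻¹' U : Set K.V) :=
  Setoid.comap (fun v => ⟨σ.ιK v.1, v.2⟩) A

/-- The copy of a partition `A` of `U` on the corresponding subset of `V(H)`. -/
def pullH (σ : NSum G K H U) (A : Setoid U) : Setoid (σ.ιH ⁻¹' U : Set H.V) :=
  Setoid.comap (fun v => ⟨σ.ιH v.1, v.2⟩) A

/-- The contraction `K/A` for a partition `A` of the common vertex set `U`. -/
noncomputable def contractK (σ : NSum G K H U) (A : Setoid U) : Multigraph :=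
  K.contract (σ.pullK A)

/-- The contraction `H/B` for a partition `B` of the common vertex set `U`. -/
noncomputable def contractH (σ : NSum G K H U) (B : Setoid U) : Multigraph :=
  H.contract (σ.pullH B)

end NSum


set_option linter.unusedSectionVars false
set_option maxHeartbeats 1000000



section Toolkit
variable {α : Type}

lemma sup_rel_left {s t : Setoid α} {x y : α} (h : s x y) : (s ⊔ t) x y :=
  (le_sup_left : s ≤ s ⊔ t) h

lemma sup_rel_right {s t : Setoid α} {x y : α} (h : t x y) : (s ⊔ t) x y :=
  (le_sup_right : t ≤ s ⊔ t) h

lemma quotMap_surj {s t : Setoid α} (h : s ≤ t) :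
    Function.Surjective (Quotient.map' (s₁ := s) (s₂ := t) id fun _ _ hab => h hab) := by
  intro q
  obtain ⟨a, rfl⟩ := Quotient.exists_rep q
  exact ⟨Quotient.mk s a, rfl⟩

lemma nblocks_le_of_le [Finite α] {s t : Setoid α} (h : s ≤ t) : nblocks t ≤ nblocks s :=
  Nat.card_le_card_of_surjective _ (quotMap_surj h)

lemma card_quot_bot : nblocks (⊥ : Setoid α) = Nat.card α := by
  refine Nat.card_congr (Equiv.symm ⟨Quotient.mk _, Quotient.lift id ?_, fun a => rfl, ?_⟩)
  · intro a b hab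
    exact hab
  · intro q
    obtain ⟨a, rfl⟩ := Quotient.exists_rep q
    rfl

lemma nblocks_comap_equiv {β : Type} (e : β ≃ α) (s : Setoid α) :
    nblocks (Setoid.comap e s) = nblocks s :=
  Nat.card_congr (Quotient.congr e fun _ _ => Iff.rfl)

lemma comap_comap {β γ : Type} (f : β → γ) (g : γ → α) (s : Setoid α) :
    Setoid.comap f (Setoid.comap g s) = Setoid.comap (g ∘ f) s :=
  Setoid.ext fun _ _ => Iff.rfl

lemma comap_mono {β : Type} (f : β → α) {s t : Setoid α} (h : s ≤ t) :
    Setoid.comap f s ≤ Setoid.comap f t := by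
  intro x y hxy
  exact h hxy

lemma comap_equiv_sup {β : Type} (e : β ≃ α) (s t : Setoid α) :
    Setoid.comap e (s ⊔ t) = Setoid.comap e s ⊔ Setoid.comap e t := by
  refine le_antisymm ?_ (sup_le (comap_mono _ le_sup_left) (comap_mono _ le_sup_right))
  have key : s ⊔ t ≤ Setoid.comap (⇑e.symm) (Setoid.comap (⇑e) s ⊔ Setoid.comap (⇑e) t) := by
    refine sup_le ?_ ?_
    · intro x y hxy
      refine sup_rel_left (s := Setoid.comap (⇑e) s) ?_
      show s (e (e.symm x)) (e (e.symm y))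
      simpa using hxy
    · intro x y hxy
      refine sup_rel_right (t := Setoid.comap (⇑e) t) ?_
      show t (e (e.symm x)) (e (e.symm y))
      simpa using hxy
  intro x y hxy
  have h2 := key hxy
  have h3 : (Setoid.comap (⇑e) s ⊔ Setoid.comap (⇑e) t) (e.symm (e x)) (e.symm (e y)) := h2
  rwa [e.symm_apply_apply, e.symm_apply_apply] at h3
end Toolkit

section Pair
variable {α : Type}

/-- The setoid generated by identifying `a` and `b`. -/
def pairS (a b : α) : Setoid α :=
  Relation.EqvGen.setoid (fun x y => x = a ∧ y = b ∨ x = b ∧ y = a)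

lemma pairS_rel (a b : α) : pairS a b a b :=
  Relation.EqvGen.rel _ _ (Or.inl ⟨rfl, rfl⟩)

/-- Explicit description of `s ⊔ pairS a b`. -/
def linkS (s : Setoid α) (a b : α) : Setoid α where
  r x y := s x y ∨ (s x a ∧ s b y) ∨ (s x b ∧ s a y)
  iseqv := by
    constructor
    · exact fun x => Or.inl (s.refl x)
    · rintro x y (h | ⟨h1, h2⟩ | ⟨h1, h2⟩)
      · exact Or.inl (s.symm h)
      · exact Or.inr (Or.inr ⟨s.symm h2, s.symm h1⟩)
      · exact Or.inr (Or.inl ⟨s.symm h2, s.symm h1⟩)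
    · rintro x y z (h | ⟨h1, h2⟩ | ⟨h1, h2⟩) (h' | ⟨h1', h2'⟩ | ⟨h1', h2'⟩)
      · exact Or.inl (s.trans h h')
      · exact Or.inr (Or.inl ⟨s.trans h h1', h2'⟩)
      · exact Or.inr (Or.inr ⟨s.trans h h1', h2'⟩)
      · exact Or.inr (Or.inl ⟨h1, s.trans h2 h'⟩)
      · exact Or.inl (s.trans h1 (s.trans (s.symm (s.trans h2 h1')) h2'))
      · exact Or.inl (s.trans h1 h2')
      · exact Or.inr (Or.inr ⟨h1, s.trans h2 h'⟩)
      · exact Or.inl (s.trans h1 h2')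
      · exact Or.inl (s.trans h1 (s.trans (s.symm (s.trans h2 h1')) h2'))

lemma sup_pairS (s : Setoid α) (a b : α) : s ⊔ pairS a b = linkS s a b := by
  refine le_antisymm (sup_le ?_ (Setoid.eqvGen_le ?_)) ?_
  · intro x y h
    exact Or.inl h
  · rintro x y (⟨hx, hy⟩ | ⟨hx, hy⟩) <;> rw [hx, hy]
    · exact Or.inr (Or.inl ⟨s.refl _, s.refl _⟩)
    · exact Or.inr (Or.inr ⟨s.refl _, s.refl _⟩)
  · rintro x y (h | ⟨h1, h2⟩ | ⟨h1, h2⟩)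
    · exact sup_rel_left h
    · exact (s ⊔ pairS a b).trans (sup_rel_left h1)
        ((s ⊔ pairS a b).trans (sup_rel_right (pairS_rel a b)) (sup_rel_left h2))
    · exact (s ⊔ pairS a b).trans (sup_rel_left h1)
        ((s ⊔ pairS a b).trans (sup_rel_right ((pairS a b).symm (pairS_rel a b)))
          (sup_rel_left h2))

lemma card_ne_add_one {γ : Type} [Finite γ] (q : γ) :
    Nat.card γ = Nat.card {x : γ // x ≠ q} + 1 := by
  classical
  have e := (Equiv.sumCompl (fun x : γ => x = q)).symm
  rw [Nat.card_congr e, Nat.card_sum]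
  have h1 : Nat.card {x : γ // x = q} = 1 := by
    have : Unique {x : γ // x = q} :=
      ⟨⟨⟨q, rfl⟩⟩, by rintro ⟨x, rfl⟩; rfl⟩
    exact Nat.card_unique
  have h2 : Nat.card {x : γ // x ≠ q} = Nat.card {a : γ // ¬ a = q} := rfl
  rw [h1]
  omega

lemma card_collapse {γ δ : Type} [Finite γ] (f : γ → δ) (hs : Function.Surjective f)
    (p q : γ) (h : ∀ c d, f c = f d → c = d ∨ ((c = p ∨ c = q) ∧ (d = p ∨ d = q))) :
    Nat.card γ ≤ Nat.card δ + 1 := by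
  have : Finite δ := Finite.of_surjective f hs
  have hinj : Function.Injective (fun x : {x : γ // x ≠ q} => f x.val) := by
    rintro ⟨c, hc⟩ ⟨d, hd⟩ hfy
    rcases h c d hfy with rfl | ⟨hc', hd'⟩
    · rfl
    · have hc'' : c = p := hc'.resolve_right hc
      have hd'' : d = p := hd'.resolve_right hd
      exact Subtype.ext (hc''.trans hd''.symm)
  have := Nat.card_le_card_of_injective _ hinj
  rw [card_ne_add_one q]
  omega

lemma card_quot_sup_pair [Finite α] (s : Setoid α) (a b : α) :
    Nat.card (Quotient s) ≤ Nat.card (Quotient (s ⊔ pairS a b)) + 1 := by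
  have hle : s ≤ s ⊔ pairS a b := le_sup_left
  refine card_collapse (Quotient.map' id fun _ _ hab => hle hab) (quotMap_surj hle)
    (Quotient.mk s a) (Quotient.mk s b) ?_
  intro c d hcd
  obtain ⟨x, rfl⟩ := Quotient.exists_rep c
  obtain ⟨y, rfl⟩ := Quotient.exists_rep d
  have hxy : (s ⊔ pairS a b) x y := Quotient.exact' hcd
  rw [sup_pairS] at hxy
  rcases hxy with h | ⟨h1, h2⟩ | ⟨h1, h2⟩
  · exact Or.inl (Quotient.sound h)
  · exact Or.inr ⟨Or.inl (Quotient.sound h1), Or.inr (Quotient.sound (s.symm h2))⟩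
  · exact Or.inr ⟨Or.inr (Quotient.sound h1), Or.inl (Quotient.sound (s.symm h2))⟩

/-- Split the class of `a` into `{a}` and the rest. -/
def splitS (s : Setoid α) (a : α) : Setoid α where
  r x y := s x y ∧ (x = a ↔ y = a)
  iseqv := by
    constructor
    · exact fun x => ⟨s.refl x, Iff.rfl⟩
    · exact fun h => ⟨s.symm h.1, h.2.symm⟩
    · exact fun h h' => ⟨s.trans h.1 h'.1, h.2.trans h'.2⟩

lemma splitS_le (s : Setoid α) (a : α) : splitS s a ≤ s := by
  intro x y h
  exact h.1

lemma splitS_sup_pair {s : Setoid α} {a b : α} (hab : a ≠ b) (h : s a b) :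
    splitS s a ⊔ pairS a b = s := by
  refine le_antisymm (sup_le (splitS_le s a) (Setoid.eqvGen_le ?_)) ?_
  · rintro x y (⟨hx, hy⟩ | ⟨hx, hy⟩) <;> rw [hx, hy]
    · exact h
    · exact s.symm h
  · intro x y hxy
    by_cases hx : x = a <;> by_cases hy : y = a
    · rw [hx, hy]
    · rw [hx] at hxy ⊢
      refine (splitS s a ⊔ pairS a b).trans (sup_rel_right (pairS_rel a b))
        (sup_rel_left ?_)
      exact ⟨s.trans (s.symm h) hxy, iff_of_false (Ne.symm hab) hy⟩
    · rw [hy] at hxy ⊢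
      refine (splitS s a ⊔ pairS a b).trans (sup_rel_left ?_)
        ((splitS s a ⊔ pairS a b).symm (sup_rel_right (pairS_rel a b)))
      exact ⟨s.trans hxy (s.symm (s.trans (s.symm h) (s.refl a))), iff_of_false hx (Ne.symm hab)⟩
    · exact sup_rel_left ⟨hxy, iff_of_false hx hy⟩

lemma nblocks_splitS [Finite α] {s : Setoid α} {a b : α} (hab : a ≠ b) (h : s a b) :
    nblocks (splitS s a) = nblocks s + 1 := by
  have hle := splitS_le s a
  set F : Quotient (splitS s a) → Quotient s := Quotient.map' id fun _ _ hxy => hle hxy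
    with hF
  have key : Function.Bijective
      (fun c : {c : Quotient (splitS s a) // c ≠ Quotient.mk _ a} => F c.val) := by
    constructor
    · rintro ⟨c, hc⟩ ⟨d, hd⟩ hcd
      obtain ⟨x, rfl⟩ := Quotient.exists_rep c
      obtain ⟨y, rfl⟩ := Quotient.exists_rep d
      have hx : x ≠ a := by
        intro hxa; rw [hxa] at hc; exact hc rfl
      have hy : y ≠ a := by
        intro hya; rw [hya] at hd; exact hd rfl
      have hxy : s x y := Quotient.exact' hcd
      exact Subtype.ext (Quotient.sound ⟨hxy, iff_of_false hx hy⟩)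
    · intro z
      obtain ⟨x, rfl⟩ := Quotient.exists_rep z
      by_cases hx : x = a
      · subst hx
        refine ⟨⟨Quotient.mk _ b, ?_⟩, ?_⟩
        · intro hb
          exact hab ((Quotient.exact' hb).2.mpr rfl).symm
        · exact Quotient.sound (s.symm h)
      · refine ⟨⟨Quotient.mk _ x, ?_⟩, rfl⟩
        intro hb
        exact hx ((Quotient.exact' hb).2.mpr rfl)
  have := Nat.card_eq_of_bijective _ key
  unfold nblocks
  rw [card_ne_add_one (Quotient.mk (splitS s a) a)]
  omega

lemma setoid_ne_bot {s : Setoid α} (h : s ≠ ⊥) : ∃ a b, a ≠ b ∧ s a b := by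
  by_contra hcon
  push_neg at hcon
  refine h (le_antisymm ?_ bot_le)
  intro x y hxy
  by_contra hne
  exact hne (by_contra fun h2 => h2 (by
    have := hcon x y
    tauto))

lemma nblocks_le_card [Finite α] (s : Setoid α) : nblocks s ≤ Nat.card α :=
  Nat.card_le_card_of_surjective (Quotient.mk s) Quotient.exists_rep

lemma nblocks_eq_card_iff_bot [Fintype α] {s : Setoid α} (h : nblocks s = Nat.card α) :
    s = ⊥ := by
  classical
  have hsur : Function.Surjective (Quotient.mk s) := Quotient.exists_rep
  have hbij : Function.Bijective (Quotient.mk s) := by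
    rw [Fintype.bijective_iff_surjective_and_card]
    refine ⟨hsur, ?_⟩
    have h1 : Nat.card α = Fintype.card α := Nat.card_eq_fintype_card
    have h2 : Nat.card (Quotient s) = Fintype.card (Quotient s) := Nat.card_eq_fintype_card
    unfold nblocks at h
    omega
  refine le_antisymm ?_ bot_le
  intro x y hxy
  exact hbij.1 (Quotient.sound hxy)

lemma nblocks_sup_add_aux [Fintype α] :
    ∀ (k : ℕ) (B A : Setoid α), Nat.card α - nblocks B ≤ k →
      nblocks A + nblocks B ≤ nblocks (A ⊔ B) + Nat.card α := by
  intro k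
  induction k with
  | zero =>
    intro B A hk
    have h1 : nblocks B ≤ Nat.card α := nblocks_le_card B
    have h2 : nblocks B = Nat.card α := by omega
    have hbot : B = ⊥ := nblocks_eq_card_iff_bot h2
    subst hbot
    rw [sup_bot_eq]
    omega
  | succ k ih =>
    intro B A hk
    by_cases hB : B = ⊥
    · subst hB
      rw [sup_bot_eq]
      have := nblocks_le_card (⊥ : Setoid α)
      omega
    · obtain ⟨a, b, hab, hrel⟩ := setoid_ne_bot hB
      have hsplit : nblocks (splitS B a) = nblocks B + 1 := nblocks_splitS hab hrel
      have hmeas : Nat.card α - nblocks (splitS B a) ≤ k := by omega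
      have ihB := ih (splitS B a) A hmeas
      have hsup : A ⊔ B = (A ⊔ splitS B a) ⊔ pairS a b := by
        rw [sup_assoc, splitS_sup_pair hab hrel]
      have hedge : nblocks (A ⊔ splitS B a) ≤ nblocks (A ⊔ B) + 1 := by
        rw [hsup]
        exact card_quot_sup_pair _ a b
      omega

lemma nblocks_sup_add [Fintype α] (A B : Setoid α) :
    nblocks A + nblocks B ≤ nblocks (A ⊔ B) + Nat.card α :=
  nblocks_sup_add_aux (Nat.card α - nblocks B) B A le_rfl

end Pair


section Glue
variable {α : Type} [Fintype α] (U : Set α)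

noncomputable def clsMap (s : Setoid α) : ↥U → Quotient s := fun u => Quotient.mk s u.val

lemma nblocks_comap_val (s : Setoid α) :
    nblocks (Setoid.comap (Subtype.val : ↥U → α) s) = Nat.card (Set.range (clsMap U s)) := by
  unfold nblocks
  exact Nat.card_congr (Setoid.comapQuotientEquiv _ s)

lemma cmu (s : Setoid α) :
    Nat.card (Quotient s) =
      nblocks (Setoid.comap (Subtype.val : ↥U → α) s) +
      Nat.card ((Set.range (clsMap U s))ᶜ : Set (Quotient s)) := by
  have h := Set.ncard_add_ncard_compl (Set.range (clsMap U s))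
  rw [nblocks_comap_val, Nat.card_coe_set_eq, Nat.card_coe_set_eq]
  omega

def glueS (R : Setoid α) (J : Setoid ↥U) (hPJ : Setoid.comap (Subtype.val : ↥U → α) R ≤ J) :
    Setoid α where
  r x y := R x y ∨ ∃ u v : ↥U, R x u.val ∧ J u v ∧ R v.val y
  iseqv := by
    constructor
    · exact fun x => Or.inl (R.refl x)
    · rintro x y (h | ⟨u, v, h1, h2, h3⟩)
      · exact Or.inl (R.symm h)
      · exact Or.inr ⟨v, u, R.symm h3, J.symm h2, R.symm h1⟩
    · rintro x y z (h | ⟨u, v, h1, h2, h3⟩) (h' | ⟨u', v', h1', h2', h3'⟩)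
      · exact Or.inl (R.trans h h')
      · exact Or.inr ⟨u', v', R.trans h h1', h2', h3'⟩
      · exact Or.inr ⟨u, v, h1, h2, R.trans h3 h'⟩
      · refine Or.inr ⟨u, v', h1, J.trans h2 (J.trans ?_ h2'), h3'⟩
        exact hPJ (show R v.val u'.val from R.trans h3 h1')
end Glue

section Glue2
variable {α : Type} [Fintype α] (U : Set α) (R : Setoid α) (A : Setoid ↥U)

lemma glue_claim1 :
    R ⊔ extendSetoid U A =
      glueS U R (Setoid.comap (Subtype.val : ↥U → α) R ⊔ A)
        le_sup_left := by
  set P := Setoid.comap (Subtype.val : ↥U → α) R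
  set T := glueS U R (P ⊔ A) le_sup_left with hT
  refine le_antisymm (sup_le ?_ ?_) ?_
  · intro x y h
    exact Or.inl h
  · rintro x y (rfl | ⟨hv, hw, hA⟩)
    · exact T.refl x
    · exact Or.inr ⟨⟨x, hv⟩, ⟨y, hw⟩, R.refl x, sup_rel_right hA, R.refl y⟩
  · have hJle : (P ⊔ A) ≤ Setoid.comap (Subtype.val : ↥U → α) (R ⊔ extendSetoid U A) := by
      refine sup_le ?_ ?_
      · exact comap_mono _ le_sup_left
      · intro u v hA
        exact sup_rel_right (s := R) (t := extendSetoid U A)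
          (Or.inr ⟨u.2, v.2, by simpa using hA⟩)
    rintro x y (h | ⟨u, v, h1, h2, h3⟩)
    · exact sup_rel_left h
    · exact (R ⊔ extendSetoid U A).trans (sup_rel_left h1)
        ((R ⊔ extendSetoid U A).trans (hJle h2) (sup_rel_left h3))

lemma glue_claim2 :
    Setoid.comap (Subtype.val : ↥U → α)
        (glueS U R (Setoid.comap (Subtype.val : ↥U → α) R ⊔ A) le_sup_left) =
      Setoid.comap (Subtype.val : ↥U → α) R ⊔ A := by
  set P := Setoid.comap (Subtype.val : ↥U → α) R
  refine Setoid.ext fun u v => ⟨?_, ?_⟩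
  · rintro (h | ⟨w, w', h1, h2, h3⟩)
    · exact sup_rel_left (show P u v from h)
    · exact (P ⊔ A).trans (sup_rel_left (show P u w from h1))
        ((P ⊔ A).trans h2 (sup_rel_left (show P w' v from h3)))
  · intro hJ
    exact Or.inr ⟨u, v, R.refl _, hJ, R.refl _⟩

lemma glue_claim3 :
    Nat.card ((Set.range (clsMap U
        (glueS U R (Setoid.comap (Subtype.val : ↥U → α) R ⊔ A) le_sup_left)))ᶜ :
        Set (Quotient (glueS U R (Setoid.comap (Subtype.val : ↥U → α) R ⊔ A) le_sup_left))) =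
      Nat.card ((Set.range (clsMap U R))ᶜ : Set (Quotient R)) := by
  set T := glueS U R (Setoid.comap (Subtype.val : ↥U → α) R ⊔ A) le_sup_left with hT
  have hle : R ≤ T := by intro x y hxy; exact Or.inl hxy
  set π : Quotient R → Quotient T := Quotient.map' id fun _ _ h => hle h with hπ
  have hπmk : ∀ x : α, π (Quotient.mk R x) = Quotient.mk T x := fun x => rfl
  have key1 : ∀ x : α,
      Quotient.mk R x ∈ Set.range (clsMap U R) ↔ Quotient.mk T x ∈ Set.range (clsMap U T) := by
    intro x
    constructor
    · rintro ⟨u, hu⟩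
      refine ⟨u, ?_⟩
      have : R u.val x := Quotient.exact' hu
      exact Quotient.sound (hle this)
    · rintro ⟨u, hu⟩
      have h2 : T u.val x := Quotient.exact' hu
      rcases h2 with h | ⟨w, w', h1, h2, h3⟩
      · exact ⟨u, Quotient.sound h⟩
      · exact ⟨w', Quotient.sound h3⟩
  have himg : π '' ((Set.range (clsMap U R))ᶜ) = (Set.range (clsMap U T))ᶜ := by
    apply Set.eq_of_subset_of_subset
    · rintro d ⟨c, hc, rfl⟩
      obtain ⟨x, rfl⟩ := Quotient.exists_rep c
      intro hmem
      exact hc ((key1 x).mpr (by rwa [hπmk] at hmem))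
    · intro d hd
      obtain ⟨x, rfl⟩ := Quotient.exists_rep d
      refine ⟨Quotient.mk R x, ?_, rfl⟩
      intro hmem
      exact hd ((key1 x).mp hmem)
  have hinj : Set.InjOn π ((Set.range (clsMap U R))ᶜ) := by
    intro c hc d hd hcd
    obtain ⟨x, rfl⟩ := Quotient.exists_rep c
    obtain ⟨y, rfl⟩ := Quotient.exists_rep d
    have hxy : T x y := Quotient.exact' hcd
    rcases hxy with h | ⟨u, v, h1, h2, h3⟩
    · exact Quotient.sound h
    · exact absurd ⟨u, Quotient.sound (R.symm h1)⟩ hc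
  rw [← himg, Nat.card_coe_set_eq, Nat.card_coe_set_eq, Set.ncard_image_of_injOn hinj]

lemma glue :
    Nat.card (Quotient (R ⊔ extendSetoid U A)) +
      nblocks (Setoid.comap (Subtype.val : ↥U → α) R) =
    Nat.card (Quotient R) +
      nblocks (Setoid.comap (Subtype.val : ↥U → α) R ⊔ A) := by
  have h1 := glue_claim1 U R A
  have h2 := cmu U (glueS U R (Setoid.comap (Subtype.val : ↥U → α) R ⊔ A) le_sup_left)
  have h3 := cmu U R
  have h4 := glue_claim2 U R A
  rw [h4] at h2
  have h5 := glue_claim3 U R A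
  rw [h1]
  omega
end Glue2


lemma sym2_exists_rep {β : Type} (z : Sym2 β) : ∃ a b, z = s(a, b) := by
  induction z using Sym2.ind with
  | _ x y => exact ⟨x, y, rfl⟩

namespace Multigraph
variable (G : Multigraph)

lemma comp_eq (S : Finset G.E) : G.omega S = nblocks (Relation.EqvGen.setoid (G.rel S)) := rfl

lemma rel_mono {S T : Finset G.E} (h : S ⊆ T) : ∀ x y, G.rel S x y → G.rel T x y := by
  rintro x y ⟨e, he, hds⟩
  exact ⟨e, h he, hds⟩

lemma omega_mono {S T : Finset G.E} (h : S ⊆ T) : G.omega T ≤ G.omega S :=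
  nblocks_le_of_le (Setoid.eqvGen_mono (G.rel_mono h))

lemma omega_empty : G.omega (∅ : Finset G.E) = Nat.card G.V := by
  have hbot : Relation.EqvGen.setoid (G.rel (∅ : Finset G.E)) = ⊥ := by
    refine le_antisymm (Setoid.eqvGen_le ?_) bot_le
    rintro x y ⟨e, he, -⟩
    simp at he
  rw [comp_eq, hbot, card_quot_bot]

lemma eqvGen_insert (e : G.E) (S : Finset G.E) {a b : G.V} (hab : G.ends e = s(a, b)) :
    Relation.EqvGen.setoid (G.rel (insert e S)) =
      Relation.EqvGen.setoid (G.rel S) ⊔ pairS a b := by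
  refine le_antisymm (Setoid.eqvGen_le ?_)
    (sup_le (Setoid.eqvGen_mono (G.rel_mono (Finset.subset_insert e S))) (Setoid.eqvGen_le ?_))
  · rintro x y ⟨f, hf, hds⟩
    rcases Finset.mem_insert.mp hf with rfl | hfS
    · rw [hab] at hds
      rcases Sym2.eq_iff.mp hds with ⟨h1, h2⟩ | ⟨h1, h2⟩
      · exact sup_rel_right (Relation.EqvGen.rel x y (Or.inl ⟨h1.symm, h2.symm⟩))
      · exact sup_rel_right (Relation.EqvGen.rel x y (Or.inr ⟨h2.symm, h1.symm⟩))
    · exact sup_rel_left (Relation.EqvGen.rel x y ⟨f, hfS, hds⟩)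
  · rintro x y (⟨hx, hy⟩ | ⟨hx, hy⟩)
    · refine Relation.EqvGen.rel x y ⟨e, Finset.mem_insert_self e S, ?_⟩
      rw [hab, hx, hy]
    · refine Relation.EqvGen.rel x y ⟨e, Finset.mem_insert_self e S, ?_⟩
      rw [hab, hx, hy, Sym2.eq_swap]

lemma card_le_omega_add_card (S : Finset G.E) :
    Fintype.card G.V ≤ G.omega S + S.card := by
  classical
  induction S using Finset.induction with
  | empty =>
    rw [G.omega_empty]
    simp [Nat.card_eq_fintype_card]
  | @insert e S hes ih =>
    obtain ⟨a, b, hab⟩ := sym2_exists_rep (G.ends e)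
    have hkey : G.omega S ≤ G.omega (insert e S) + 1 := by
      rw [comp_eq, comp_eq, eqvGen_insert G e S hab]
      exact card_quot_sup_pair _ a b
    rw [Finset.card_insert_of_notMem hes]
    omega

lemma nblocks_part_le (U : Set G.V) (S : Finset G.E) :
    nblocks (G.part U S) ≤ G.omega S := by
  rw [show G.part U S = Setoid.comap (Subtype.val : ↥U → G.V)
      (Relation.EqvGen.setoid (G.rel S)) from rfl,
    nblocks_comap_val]
  exact Nat.card_le_card_of_injective Subtype.val Subtype.val_injective

end Multigraph


section Contract
variable {K : Multigraph} {U' : Set K.V} (A : Setoid ↥U')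

lemma nblocks_comap_le {β γ : Type} [Finite γ] (f : β → γ) (s : Setoid γ) :
    nblocks (Setoid.comap f s) ≤ nblocks s := by
  have h := Nat.card_congr (Setoid.comapQuotientEquiv f s)
  unfold nblocks
  rw [h]
  exact Nat.card_le_card_of_injective Subtype.val Subtype.val_injective

lemma contract_quot_equiv (S : Finset K.E) :
    Nat.card (Quotient (Relation.EqvGen.setoid ((K.contract A).rel S))) =
      Nat.card (Quotient (Relation.EqvGen.setoid (K.rel S) ⊔ extendSetoid U' A)) := by
  set R := Relation.EqvGen.setoid (K.rel S) with hR
  set Ext := extendSetoid U' A with hExt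
  set RC := Relation.EqvGen.setoid ((K.contract A).rel S) with hRC
  -- forward map
  have h1 : ∀ a b : K.V, Ext a b → Quotient.mk (R ⊔ Ext) a = Quotient.mk (R ⊔ Ext) b :=
    fun a b h => Quotient.sound (sup_rel_right h)
  set fwd : (K.contract A).V → Quotient (R ⊔ Ext) := Quotient.lift (Quotient.mk (R ⊔ Ext)) h1
    with hfwd
  have hker : RC ≤ Setoid.ker fwd := by
    refine Setoid.eqvGen_le ?_
    rintro q q' ⟨e, he, hends⟩
    obtain ⟨a, b, hab⟩ := sym2_exists_rep (K.ends e)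
    have hmap : (K.contract A).ends e = s(Quotient.mk (extendSetoid U' A) a,
        Quotient.mk (extendSetoid U' A) b) := by
      show Sym2.map _ (K.ends e) = _
      rw [hab, Sym2.map_pair_eq]
    rw [hmap] at hends
    have hRab : (R ⊔ Ext) a b := sup_rel_left (Relation.EqvGen.rel a b ⟨e, he, hab⟩)
    rcases Sym2.eq_iff.mp hends with ⟨h1', h2'⟩ | ⟨h1', h2'⟩
    · rw [← h1', ← h2']
      show (Quotient.mk (R ⊔ Ext) a) = (Quotient.mk (R ⊔ Ext) b)
      exact Quotient.sound hRab
    · rw [← h1', ← h2']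
      show (Quotient.mk (R ⊔ Ext) b) = (Quotient.mk (R ⊔ Ext) a)
      exact (Quotient.sound hRab).symm
  have hker2 : (R ⊔ Ext) ≤ Setoid.ker (fun v : K.V =>
      Quotient.mk RC (Quotient.mk (extendSetoid U' A) v)) := by
    refine sup_le (Setoid.eqvGen_le ?_) ?_
    · rintro a b ⟨e, he, hab⟩
      have : (K.contract A).rel S (Quotient.mk (extendSetoid U' A) a)
          (Quotient.mk (extendSetoid U' A) b) := by
        refine ⟨e, he, ?_⟩
        show Sym2.map _ (K.ends e) = _
        rw [hab, Sym2.map_pair_eq]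
        rfl
      exact Quotient.sound (Relation.EqvGen.rel _ _ this)
    · intro a b h
      show Quotient.mk RC (Quotient.mk (extendSetoid U' A) a) = _
      rw [Quotient.sound (h : Ext a b)]
  refine Nat.card_eq_of_bijective (Quotient.lift fwd fun q q' h => hker h) ?_
  rw [Function.bijective_iff_has_inverse]
  refine ⟨Quotient.lift (fun v => Quotient.mk RC (Quotient.mk (extendSetoid U' A) v))
    (fun a b h => hker2 h), ?_, ?_⟩
  · intro c
    obtain ⟨q, rfl⟩ := Quotient.exists_rep c
    obtain ⟨v, rfl⟩ := Quotient.exists_rep q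
    rfl
  · intro c
    obtain ⟨v, rfl⟩ := Quotient.exists_rep c
    rfl

lemma contract_omega (S : Finset K.E) :
    (K.contract A).omega S + nblocks (K.part U' S) =
      K.omega S + nblocks (K.part U' S ⊔ A) := by
  have h1 := contract_quot_equiv A S
  have h2 := glue U' (Relation.EqvGen.setoid (K.rel S)) A
  show Nat.card (Quotient (Relation.EqvGen.setoid ((K.contract A).rel S))) + _ = _
  rw [h1]
  exact h2

lemma contract_cardV :
    Nat.card (K.contract A).V + Nat.card ↥U' = Nat.card K.V + nblocks A := by
  have h := glue U' (⊥ : Setoid K.V) A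
  have hb : (⊥ : Setoid K.V) ⊔ extendSetoid U' A = extendSetoid U' A := bot_sup_eq _
  have hc : Setoid.comap (Subtype.val : ↥U' → K.V) (⊥ : Setoid K.V) = (⊥ : Setoid ↥U') := by
    refine Setoid.ext fun u v => ?_
    constructor
    · intro hh
      have : u.val = v.val := hh
      exact Subtype.ext this
    · intro hh
      have : u = v := hh
      exact congrArg Subtype.val this
  rw [hb, hc, bot_sup_eq] at h
  have hq : Nat.card (Quotient (⊥ : Setoid K.V)) = Nat.card K.V := card_quot_bot
  have hq2 : nblocks (⊥ : Setoid ↥U') = Nat.card ↥U' := card_quot_bot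
  show Nat.card (Quotient (extendSetoid U' A)) + _ = _
  omega

lemma contract_connected (hK : K.omegaG = 1) : (K.contract A).omegaG = 1 := by
  have h1 : (K.contract A).omegaG =
      Nat.card (Quotient (Relation.EqvGen.setoid (K.rel Finset.univ) ⊔ extendSetoid U' A)) :=
    contract_quot_equiv A Finset.univ
  have hle : Nat.card (Quotient (Relation.EqvGen.setoid (K.rel Finset.univ) ⊔ extendSetoid U' A))
      ≤ K.omegaG := nblocks_le_of_le le_sup_left
  have hne : Nonempty K.V := by
    by_contra hcon
    rw [not_nonempty_iff] at hcon
    have hemp : IsEmpty (Quotient (Relation.EqvGen.setoid (K.rel Finset.univ))) :=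
      ⟨fun q => (Quotient.exists_rep q).elim (fun v _ => hcon.elim v)⟩
    have hzero : K.omegaG = 0 := Nat.card_of_isEmpty
    rw [hK] at hzero
    exact one_ne_zero hzero
  have hpos : 0 < Nat.card (Quotient (Relation.EqvGen.setoid (K.rel Finset.univ) ⊔
      extendSetoid U' A)) := by
    rw [Nat.card_pos_iff]
    exact ⟨⟨Quotient.mk _ (Classical.arbitrary K.V)⟩, inferInstance⟩
  rw [h1]
  omega

end Contract


namespace NSum
variable {G K H : Multigraph} {U : Set G.V}

lemma U_sub_rangeK (σ : NSum G K H U) : U ⊆ Set.range σ.ιK := fun x hx =>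
  ((Set.ext_iff.mp σ.inter x).mpr hx).1

lemma U_sub_rangeH (σ : NSum G K H U) : U ⊆ Set.range σ.ιH := fun x hx =>
  ((Set.ext_iff.mp σ.inter x).mpr hx).2

lemma mem_U_of_ranges (σ : NSum G K H U) {x : G.V} (h1 : x ∈ Set.range σ.ιK)
    (h2 : x ∈ Set.range σ.ιH) : x ∈ U :=
  (Set.ext_iff.mp σ.inter x).mp ⟨h1, h2⟩

lemma mem_ranges (σ : NSum G K H U) (x : G.V) :
    x ∈ Set.range σ.ιK ∪ Set.range σ.ιH :=
  (Set.ext_iff.mp σ.cover x).mpr trivial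

noncomputable def eqK (σ : NSum G K H U) : ↥(σ.ιK ⁻¹' U) ≃ ↥U :=
  Equiv.ofBijective (fun v => ⟨σ.ιK v.1, v.2⟩)
    ⟨fun v w h => Subtype.ext (σ.injK (congrArg Subtype.val h)),
     fun u => by
      obtain ⟨w, hw⟩ := σ.U_sub_rangeK u.2
      exact ⟨⟨w, by simp [Set.mem_preimage, hw, u.2]⟩, Subtype.ext hw⟩⟩

noncomputable def eqH (σ : NSum G K H U) : ↥(σ.ιH ⁻¹' U) ≃ ↥U :=
  Equiv.ofBijective (fun v => ⟨σ.ιH v.1, v.2⟩)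
    ⟨fun v w h => Subtype.ext (σ.injH (congrArg Subtype.val h)),
     fun u => by
      obtain ⟨w, hw⟩ := σ.U_sub_rangeH u.2
      exact ⟨⟨w, by simp [Set.mem_preimage, hw, u.2]⟩, Subtype.ext hw⟩⟩

noncomputable def uKmap (σ : NSum G K H U) : ↥U → K.V := fun u => (σ.eqK.symm u).val

noncomputable def uHmap (σ : NSum G K H U) : ↥U → H.V := fun u => (σ.eqH.symm u).val

lemma ιK_uKmap (σ : NSum G K H U) (u : ↥U) : σ.ιK (σ.uKmap u) = u.val :=
  congrArg Subtype.val (σ.eqK.apply_symm_apply u)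

lemma ιH_uHmap (σ : NSum G K H U) (u : ↥U) : σ.ιH (σ.uHmap u) = u.val :=
  congrArg Subtype.val (σ.eqH.apply_symm_apply u)

lemma pullK_eq (σ : NSum G K H U) (A : Setoid ↥U) :
    σ.pullK A = Setoid.comap (⇑σ.eqK) A := rfl

lemma pullH_eq (σ : NSum G K H U) (A : Setoid ↥U) :
    σ.pullH A = Setoid.comap (⇑σ.eqH) A := rfl

section TS
variable (σ : NSum G K H U) (RK : Setoid K.V) (RH : Setoid H.V)

def cKr (x y : G.V) : Prop := ∃ w w' : K.V, σ.ιK w = x ∧ σ.ιK w' = y ∧ RK w w'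

def cHr (x y : G.V) : Prop := ∃ w w' : H.V, σ.ιH w = x ∧ σ.ιH w' = y ∧ RH w w'

noncomputable def AUs : Setoid ↥U := Setoid.comap σ.uKmap RK

noncomputable def BUs : Setoid ↥U := Setoid.comap σ.uHmap RH

noncomputable def Js : Setoid ↥U := AUs σ RK ⊔ BUs σ RH

def reach (x : G.V) (u : ↥U) : Prop := cKr σ RK x u.val ∨ cHr σ RH x u.val

variable {σ RK RH}

lemma cKr_symm {x y} (h : cKr σ RK x y) : cKr σ RK y x := by
  obtain ⟨w, w', h1, h2, h3⟩ := h
  exact ⟨w', w, h2, h1, RK.symm h3⟩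

lemma cHr_symm {x y} (h : cHr σ RH x y) : cHr σ RH y x := by
  obtain ⟨w, w', h1, h2, h3⟩ := h
  exact ⟨w', w, h2, h1, RH.symm h3⟩

lemma cKr_trans {x y z} (h : cKr σ RK x y) (h' : cKr σ RK y z) : cKr σ RK x z := by
  obtain ⟨w, w', h1, h2, h3⟩ := h
  obtain ⟨v, v', h1', h2', h3'⟩ := h'
  have : v = w' := σ.injK (h1'.trans h2.symm)
  exact ⟨w, v', h1, h2', RK.trans h3 (this ▸ h3')⟩

lemma cHr_trans {x y z} (h : cHr σ RH x y) (h' : cHr σ RH y z) : cHr σ RH x z := by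
  obtain ⟨w, w', h1, h2, h3⟩ := h
  obtain ⟨v, v', h1', h2', h3'⟩ := h'
  have : v = w' := σ.injH (h1'.trans h2.symm)
  exact ⟨w, v', h1, h2', RH.trans h3 (this ▸ h3')⟩

lemma cKr_left {x y} (h : cKr σ RK x y) : x ∈ Set.range σ.ιK := by
  obtain ⟨w, w', h1, -, -⟩ := h
  exact ⟨w, h1⟩

lemma cHr_left {x y} (h : cHr σ RH x y) : x ∈ Set.range σ.ιH := by
  obtain ⟨w, w', h1, -, -⟩ := h
  exact ⟨w, h1⟩

lemma cKr_AU {u v : ↥U} (h : cKr σ RK u.val v.val) : AUs σ RK u v := by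
  obtain ⟨w, w', h1, h2, h3⟩ := h
  have e1 : w = σ.uKmap u := σ.injK (h1.trans (σ.ιK_uKmap u).symm)
  have e2 : w' = σ.uKmap v := σ.injK (h2.trans (σ.ιK_uKmap v).symm)
  show RK (σ.uKmap u) (σ.uKmap v)
  rw [← e1, ← e2]
  exact h3

lemma cHr_BU {u v : ↥U} (h : cHr σ RH u.val v.val) : BUs σ RH u v := by
  obtain ⟨w, w', h1, h2, h3⟩ := h
  have e1 : w = σ.uHmap u := σ.injH (h1.trans (σ.ιH_uHmap u).symm)
  have e2 : w' = σ.uHmap v := σ.injH (h2.trans (σ.ιH_uHmap v).symm)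
  show RH (σ.uHmap u) (σ.uHmap v)
  rw [← e1, ← e2]
  exact h3

lemma AU_cKr {u v : ↥U} (h : AUs σ RK u v) : cKr σ RK u.val v.val :=
  ⟨σ.uKmap u, σ.uKmap v, σ.ιK_uKmap u, σ.ιK_uKmap v, h⟩

lemma BU_cHr {u v : ↥U} (h : BUs σ RH u v) : cHr σ RH u.val v.val :=
  ⟨σ.uHmap u, σ.uHmap v, σ.ιH_uHmap u, σ.ιH_uHmap v, h⟩

/-- If `x` reaches both `u` and `v` then `u` and `v` are joined. -/
lemma reach_merge {x : G.V} {u v : ↥U} (h1 : reach σ RK RH x u) (h2 : reach σ RK RH x v) :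
    Js σ RK RH u v := by
  rcases h1 with h1 | h1 <;> rcases h2 with h2 | h2
  · exact sup_rel_left (cKr_AU (cKr_trans (cKr_symm h1) h2))
  · have hU : x ∈ U := σ.mem_U_of_ranges (cKr_left h1) (cHr_left h2)
    refine (Js σ RK RH).trans (sup_rel_left (cKr_AU (u := u) (v := ⟨x, hU⟩) (cKr_symm h1)))
      (sup_rel_right (cHr_BU (u := (⟨x, hU⟩ : ↥U)) (v := v) h2))
  · have hU : x ∈ U := σ.mem_U_of_ranges (cKr_left h2) (cHr_left h1)
    refine (Js σ RK RH).trans (sup_rel_right (cHr_BU (u := u) (v := ⟨x, hU⟩) (cHr_symm h1)))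
      (sup_rel_left (cKr_AU (u := (⟨x, hU⟩ : ↥U)) (v := v) h2))
  · exact sup_rel_right (cHr_BU (cHr_trans (cHr_symm h1) h2))

/-- Moving a reach-point across a direct边 edge. -/
lemma reach_step {x y : G.V} {u : ↥U} (hxy : cKr σ RK x y ∨ cHr σ RH x y)
    (h : reach σ RK RH y u) : ∃ u', reach σ RK RH x u' ∧ Js σ RK RH u' u := by
  rcases hxy with hxy | hxy <;> rcases h with h | h
  · exact ⟨u, Or.inl (cKr_trans hxy h), (Js σ RK RH).refl u⟩
  · have hU : y ∈ U := σ.mem_U_of_ranges (cKr_left (cKr_symm hxy)) (cHr_left h)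
    exact ⟨⟨y, hU⟩, Or.inl hxy, sup_rel_right (cHr_BU h)⟩
  · have hU : y ∈ U := σ.mem_U_of_ranges (cKr_left h) (cHr_left (cHr_symm hxy))
    exact ⟨⟨y, hU⟩, Or.inr hxy, sup_rel_left (cKr_AU h)⟩
  · exact ⟨u, Or.inr (cHr_trans hxy h), (Js σ RK RH).refl u⟩

variable (σ RK RH)

/-- The explicit description of connectivity on the `n`-sum. -/
noncomputable def TS : Setoid G.V where
  r x y := cKr σ RK x y ∨ cHr σ RH x y ∨
    ∃ u v : ↥U, reach σ RK RH x u ∧ Js σ RK RH u v ∧ reach σ RK RH y v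
  iseqv := by
    constructor
    · intro x
      rcases σ.mem_ranges x with ⟨w, hw⟩ | ⟨w, hw⟩
      · exact Or.inl ⟨w, w, hw, hw, RK.refl w⟩
      · exact Or.inr (Or.inl ⟨w, w, hw, hw, RH.refl w⟩)
    · rintro x y (h | h | ⟨u, v, h1, h2, h3⟩)
      · exact Or.inl (cKr_symm h)
      · exact Or.inr (Or.inl (cHr_symm h))
      · exact Or.inr (Or.inr ⟨v, u, h3, (Js σ RK RH).symm h2, h1⟩)
    · rintro x y z (h | h | ⟨u, v, h1, h2, h3⟩) (h' | h' | ⟨u', v', h1', h2', h3'⟩)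
      · exact Or.inl (cKr_trans h h')
      · have hU : y ∈ U := σ.mem_U_of_ranges (cKr_left (cKr_symm h)) (cHr_left h')
        exact Or.inr (Or.inr ⟨⟨y, hU⟩, ⟨y, hU⟩, Or.inl h, (Js σ RK RH).refl _,
          Or.inr (cHr_symm h')⟩)
      · obtain ⟨u'', hr, hj⟩ := reach_step (Or.inl h) h1'
        exact Or.inr (Or.inr ⟨u'', v', hr, (Js σ RK RH).trans hj h2', h3'⟩)
      · have hU : y ∈ U := σ.mem_U_of_ranges (cKr_left h') (cHr_left (cHr_symm h))
        exact Or.inr (Or.inr ⟨⟨y, hU⟩, ⟨y, hU⟩, Or.inr h, (Js σ RK RH).refl _,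
          Or.inl (cKr_symm h')⟩)
      · exact Or.inr (Or.inl (cHr_trans h h'))
      · obtain ⟨u'', hr, hj⟩ := reach_step (Or.inr h) h1'
        exact Or.inr (Or.inr ⟨u'', v', hr, (Js σ RK RH).trans hj h2', h3'⟩)
      · obtain ⟨v'', hr, hj⟩ := reach_step (Or.inl (cKr_symm h')) h3
        exact Or.inr (Or.inr ⟨u, v'', h1, (Js σ RK RH).trans h2 ((Js σ RK RH).symm hj), hr⟩)
      · obtain ⟨v'', hr, hj⟩ := reach_step (Or.inr (cHr_symm h')) h3
        exact Or.inr (Or.inr ⟨u, v'', h1, (Js σ RK RH).trans h2 ((Js σ RK RH).symm hj), hr⟩)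
      · have hmid : Js σ RK RH v u' := reach_merge h3 h1'
        exact Or.inr (Or.inr ⟨u, v', h1, (Js σ RK RH).trans h2 ((Js σ RK RH).trans hmid h2'),
          h3'⟩)
end TS
end NSum


namespace NSum
variable {G K H : Multigraph} {U : Set G.V} (σ : NSum G K H U)

noncomputable def SKf (S : Finset G.E) : Finset K.E :=
  Finset.univ.filter fun a => σ.edgeEquiv.symm (Sum.inl a) ∈ S

noncomputable def SHf (S : Finset G.E) : Finset H.E :=
  Finset.univ.filter fun b => σ.edgeEquiv.symm (Sum.inr b) ∈ S

lemma mem_SKf {S : Finset G.E} {a : K.E} :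
    a ∈ σ.SKf S ↔ σ.edgeEquiv.symm (Sum.inl a) ∈ S := by
  simp [SKf]

lemma mem_SHf {S : Finset G.E} {b : H.E} :
    b ∈ σ.SHf S ↔ σ.edgeEquiv.symm (Sum.inr b) ∈ S := by
  simp [SHf]

lemma card_SKf_SHf (S : Finset G.E) : (σ.SKf S).card + (σ.SHf S).card = S.card := by
  classical
  have h1 : σ.SKf S = (S.image σ.edgeEquiv).toLeft := by
    ext a
    rw [mem_SKf, Finset.mem_toLeft, Finset.mem_image]
    constructor
    · intro h
      exact ⟨_, h, σ.edgeEquiv.apply_symm_apply _⟩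
    · rintro ⟨e, he, hq⟩
      rwa [← hq, σ.edgeEquiv.symm_apply_apply]
  have h2 : σ.SHf S = (S.image σ.edgeEquiv).toRight := by
    ext b
    rw [mem_SHf, Finset.mem_toRight, Finset.mem_image]
    constructor
    · intro h
      exact ⟨_, h, σ.edgeEquiv.apply_symm_apply _⟩
    · rintro ⟨e, he, hq⟩
      rwa [← hq, σ.edgeEquiv.symm_apply_apply]
  rw [h1, h2, Finset.card_toLeft_add_card_toRight,
    Finset.card_image_of_injective S σ.edgeEquiv.injective]

noncomputable def coF (P : Finset K.E) (Q : Finset H.E) : Finset G.E :=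
  Finset.univ.filter fun e => Sum.elim (· ∈ P) (· ∈ Q) (σ.edgeEquiv e)

lemma SKf_coF (P : Finset K.E) (Q : Finset H.E) : σ.SKf (σ.coF P Q) = P := by
  ext a
  rw [mem_SKf]
  simp only [coF, Finset.mem_filter, Finset.mem_univ, true_and,
    σ.edgeEquiv.apply_symm_apply]
  rfl

lemma SHf_coF (P : Finset K.E) (Q : Finset H.E) : σ.SHf (σ.coF P Q) = Q := by
  ext b
  rw [mem_SHf]
  simp only [coF, Finset.mem_filter, Finset.mem_univ, true_and,
    σ.edgeEquiv.apply_symm_apply]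
  rfl

lemma coF_SKf_SHf (S : Finset G.E) : σ.coF (σ.SKf S) (σ.SHf S) = S := by
  ext e
  simp only [coF, Finset.mem_filter, Finset.mem_univ, true_and]
  rcases he : σ.edgeEquiv e with a | b
  · have : e = σ.edgeEquiv.symm (Sum.inl a) := by rw [← he, σ.edgeEquiv.symm_apply_apply]
    simp only [Sum.elim_inl, mem_SKf, ← this]
  · have : e = σ.edgeEquiv.symm (Sum.inr b) := by rw [← he, σ.edgeEquiv.symm_apply_apply]
    simp only [Sum.elim_inr, mem_SHf, ← this]

section SplitOmega
variable (S : Finset G.E)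

lemma cKr_le_RG {x y : G.V} (h : cKr σ (Relation.EqvGen.setoid (K.rel (σ.SKf S))) x y) :
    Relation.EqvGen.setoid (G.rel S) x y := by
  obtain ⟨w, w', hx, hy, hr⟩ := h
  have key : Relation.EqvGen.setoid (K.rel (σ.SKf S)) ≤
      Setoid.comap σ.ιK (Relation.EqvGen.setoid (G.rel S)) := by
    refine Setoid.eqvGen_le ?_
    rintro a b ⟨f, hf, hends⟩
    refine Relation.EqvGen.rel _ _ ⟨σ.edgeEquiv.symm (Sum.inl f), σ.mem_SKf.mp hf, ?_⟩
    rw [σ.endsK f, hends, Sym2.map_pair_eq]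
  have := key hr
  rw [← hx, ← hy]
  exact this

lemma cHr_le_RG {x y : G.V} (h : cHr σ (Relation.EqvGen.setoid (H.rel (σ.SHf S))) x y) :
    Relation.EqvGen.setoid (G.rel S) x y := by
  obtain ⟨w, w', hx, hy, hr⟩ := h
  have key : Relation.EqvGen.setoid (H.rel (σ.SHf S)) ≤
      Setoid.comap σ.ιH (Relation.EqvGen.setoid (G.rel S)) := by
    refine Setoid.eqvGen_le ?_
    rintro a b ⟨f, hf, hends⟩
    refine Relation.EqvGen.rel _ _ ⟨σ.edgeEquiv.symm (Sum.inr f), σ.mem_SHf.mp hf, ?_⟩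
    rw [σ.endsH f, hends, Sym2.map_pair_eq]
  have := key hr
  rw [← hx, ← hy]
  exact this

lemma Js_le_RG {u v : ↥U}
    (h : Js σ (Relation.EqvGen.setoid (K.rel (σ.SKf S)))
      (Relation.EqvGen.setoid (H.rel (σ.SHf S))) u v) :
    Relation.EqvGen.setoid (G.rel S) u.val v.val := by
  have hle : Js σ (Relation.EqvGen.setoid (K.rel (σ.SKf S)))
      (Relation.EqvGen.setoid (H.rel (σ.SHf S))) ≤
      Setoid.comap (Subtype.val : ↥U → G.V) (Relation.EqvGen.setoid (G.rel S)) := by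
    refine sup_le ?_ ?_
    · intro u v h
      exact σ.cKr_le_RG S (AU_cKr h)
    · intro u v h
      exact σ.cHr_le_RG S (BU_cHr h)
  exact hle h

lemma RG_eq_TS :
    Relation.EqvGen.setoid (G.rel S) =
      TS σ (Relation.EqvGen.setoid (K.rel (σ.SKf S)))
        (Relation.EqvGen.setoid (H.rel (σ.SHf S))) := by
  set RK := Relation.EqvGen.setoid (K.rel (σ.SKf S))
  set RH := Relation.EqvGen.setoid (H.rel (σ.SHf S))
  refine le_antisymm (Setoid.eqvGen_le ?_) ?_
  · rintro x y ⟨e, he, hends⟩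
    rcases heq : σ.edgeEquiv e with a | b
    · have he2 : e = σ.edgeEquiv.symm (Sum.inl a) := by
        rw [← heq, σ.edgeEquiv.symm_apply_apply]
      obtain ⟨w, w', hrep⟩ := sym2_exists_rep (K.ends a)
      have hends2 : s(σ.ιK w, σ.ιK w') = s(x, y) := by
        rw [← Sym2.map_pair_eq σ.ιK, ← hrep, ← σ.endsK a, ← he2, hends]
      have hmem : a ∈ σ.SKf S := σ.mem_SKf.mpr (he2 ▸ he)
      have hrel : RK w w' := Relation.EqvGen.rel _ _ ⟨a, hmem, hrep⟩
      rcases Sym2.eq_iff.mp hends2 with ⟨h1, h2⟩ | ⟨h1, h2⟩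
      · exact Or.inl ⟨w, w', h1, h2, hrel⟩
      · exact Or.inl ⟨w', w, h2, h1, RK.symm hrel⟩
    · have he2 : e = σ.edgeEquiv.symm (Sum.inr b) := by
        rw [← heq, σ.edgeEquiv.symm_apply_apply]
      obtain ⟨w, w', hrep⟩ := sym2_exists_rep (H.ends b)
      have hends2 : s(σ.ιH w, σ.ιH w') = s(x, y) := by
        rw [← Sym2.map_pair_eq σ.ιH, ← hrep, ← σ.endsH b, ← he2, hends]
      have hmem : b ∈ σ.SHf S := σ.mem_SHf.mpr (he2 ▸ he)
      have hrel : RH w w' := Relation.EqvGen.rel _ _ ⟨b, hmem, hrep⟩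
      rcases Sym2.eq_iff.mp hends2 with ⟨h1, h2⟩ | ⟨h1, h2⟩
      · exact Or.inr (Or.inl ⟨w, w', h1, h2, hrel⟩)
      · exact Or.inr (Or.inl ⟨w', w, h2, h1, RH.symm hrel⟩)
  · rintro x y (h | h | ⟨u, v, h1, h2, h3⟩)
    · exact σ.cKr_le_RG S h
    · exact σ.cHr_le_RG S h
    · have r1 : Relation.EqvGen.setoid (G.rel S) x u.val := by
        rcases h1 with h1 | h1
        · exact σ.cKr_le_RG S h1
        · exact σ.cHr_le_RG S h1
      have r3 : Relation.EqvGen.setoid (G.rel S) y v.val := by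
        rcases h3 with h3 | h3
        · exact σ.cKr_le_RG S h3
        · exact σ.cHr_le_RG S h3
      exact (Relation.EqvGen.setoid (G.rel S)).trans r1
        ((Relation.EqvGen.setoid (G.rel S)).trans (σ.Js_le_RG S h2)
          ((Relation.EqvGen.setoid (G.rel S)).symm r3))

lemma comap_RG :
    Setoid.comap (Subtype.val : ↥U → G.V) (Relation.EqvGen.setoid (G.rel S)) =
      Js σ (Relation.EqvGen.setoid (K.rel (σ.SKf S)))
        (Relation.EqvGen.setoid (H.rel (σ.SHf S))) := by
  set RK := Relation.EqvGen.setoid (K.rel (σ.SKf S))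
  set RH := Relation.EqvGen.setoid (H.rel (σ.SHf S))
  refine Setoid.ext fun u v => ?_
  constructor
  · intro h
    have h2 : TS σ RK RH u.val v.val := by
      rw [← RG_eq_TS]
      exact h
    rcases h2 with h2 | h2 | ⟨w, w', hr1, hr2, hr3⟩
    · exact sup_rel_left (cKr_AU h2)
    · exact sup_rel_right (cHr_BU h2)
    · have j1 : Js σ RK RH u w := by
        rcases hr1 with hr1 | hr1
        · exact sup_rel_left (cKr_AU hr1)
        · exact sup_rel_right (cHr_BU hr1)
      have j3 : Js σ RK RH v w' := by
        rcases hr3 with hr3 | hr3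
        · exact sup_rel_left (cKr_AU hr3)
        · exact sup_rel_right (cHr_BU hr3)
      exact (Js σ RK RH).trans j1 ((Js σ RK RH).trans hr2 ((Js σ RK RH).symm j3))
  · intro h
    exact σ.Js_le_RG S h

end SplitOmega
end NSum


namespace NSum
variable {G K H : Multigraph} {U : Set G.V} (σ : NSum G K H U) (S : Finset G.E)

/-- Structure of `G`-classes that avoid `U`, seen from the `K` side. -/
lemma factK {w : K.V}
    (hnm : (Quotient.mk (Relation.EqvGen.setoid (K.rel (σ.SKf S))) w) ∉
      Set.range (clsMap (σ.ιK ⁻¹' U) (Relation.EqvGen.setoid (K.rel (σ.SKf S)))))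
    {y : G.V} (h : Relation.EqvGen.setoid (G.rel S) (σ.ιK w) y) :
    ∃ w', y = σ.ιK w' ∧ Relation.EqvGen.setoid (K.rel (σ.SKf S)) w w' := by
  set RK := Relation.EqvGen.setoid (K.rel (σ.SKf S)) with hRK
  set RH := Relation.EqvGen.setoid (H.rel (σ.SHf S)) with hRH
  have hUK : ∀ z : K.V, RK w z → σ.ιK z ∉ U := by
    intro z hz hmem
    exact hnm ⟨⟨z, hmem⟩, Quotient.sound (RK.symm hz)⟩
  have hKU : σ.ιK w ∉ Set.range σ.ιH := by
    intro hr
    exact hUK w (RK.refl w) (σ.mem_U_of_ranges ⟨w, rfl⟩ hr)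
  rw [σ.RG_eq_TS S] at h
  rcases h with h | h | ⟨u, v, h1, h2, h3⟩
  · obtain ⟨a, a', ha, ha', hr⟩ := h
    have : a = w := σ.injK ha
    exact ⟨a', ha'.symm, this ▸ hr⟩
  · exact absurd (cHr_left h) hKU
  · rcases h1 with h1 | h1
    · obtain ⟨a, a', ha, ha', hr⟩ := h1
      have haw : a = w := σ.injK ha
      have hr' : Relation.EqvGen.setoid (K.rel (σ.SKf S)) w a' := by rwa [haw] at hr
      have hnotU := hUK a' hr'
      rw [ha'] at hnotU
      exact absurd u.2 hnotU
    · exact absurd (cHr_left h1) hKU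

lemma factH {w : H.V}
    (hnm : (Quotient.mk (Relation.EqvGen.setoid (H.rel (σ.SHf S))) w) ∉
      Set.range (clsMap (σ.ιH ⁻¹' U) (Relation.EqvGen.setoid (H.rel (σ.SHf S)))))
    {y : G.V} (h : Relation.EqvGen.setoid (G.rel S) (σ.ιH w) y) :
    ∃ w', y = σ.ιH w' ∧ Relation.EqvGen.setoid (H.rel (σ.SHf S)) w w' := by
  set RH := Relation.EqvGen.setoid (H.rel (σ.SHf S)) with hRH
  have hUH : ∀ z : H.V, RH w z → σ.ιH z ∉ U := by
    intro z hz hmem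
    exact hnm ⟨⟨z, hmem⟩, Quotient.sound (RH.symm hz)⟩
  have hHU : σ.ιH w ∉ Set.range σ.ιK := by
    intro hr
    exact hUH w (RH.refl w) (σ.mem_U_of_ranges hr ⟨w, rfl⟩)
  rw [σ.RG_eq_TS S] at h
  rcases h with h | h | ⟨u, v, h1, h2, h3⟩
  · exact absurd (cKr_left h) hHU
  · obtain ⟨a, a', ha, ha', hr⟩ := h
    have : a = w := σ.injH ha
    exact ⟨a', ha'.symm, this ▸ hr⟩
  · rcases h1 with h1 | h1
    · exact absurd (cKr_left h1) hHU
    · obtain ⟨a, a', ha, ha', hr⟩ := h1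
      have haw : a = w := σ.injH ha
      have hr' : RH w a' := by rwa [haw] at hr
      have hnotU := hUH a' hr'
      rw [ha'] at hnotU
      exact absurd u.2 hnotU

lemma nonmeet_card :
    Nat.card ((Set.range (clsMap U (Relation.EqvGen.setoid (G.rel S))))ᶜ :
        Set (Quotient (Relation.EqvGen.setoid (G.rel S)))) =
      Nat.card ((Set.range (clsMap (σ.ιK ⁻¹' U) (Relation.EqvGen.setoid (K.rel (σ.SKf S)))))ᶜ :
        Set (Quotient (Relation.EqvGen.setoid (K.rel (σ.SKf S))))) +
      Nat.card ((Set.range (clsMap (σ.ιH ⁻¹' U) (Relation.EqvGen.setoid (H.rel (σ.SHf S)))))ᶜ :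
        Set (Quotient (Relation.EqvGen.setoid (H.rel (σ.SHf S))))) := by
  set RK := Relation.EqvGen.setoid (K.rel (σ.SKf S)) with hRK
  set RH := Relation.EqvGen.setoid (H.rel (σ.SHf S)) with hRH
  set RG := Relation.EqvGen.setoid (G.rel S) with hRG
  set πK : Quotient RK → Quotient RG :=
    Quotient.lift (fun w => Quotient.mk RG (σ.ιK w))
      (fun w w' h => Quotient.sound (σ.cKr_le_RG S ⟨w, w', rfl, rfl, h⟩)) with hπK
  set πH : Quotient RH → Quotient RG :=
    Quotient.lift (fun w => Quotient.mk RG (σ.ιH w))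
      (fun w w' h => Quotient.sound (σ.cHr_le_RG S ⟨w, w', rfl, rfl, h⟩)) with hπH
  rw [← Nat.card_sum]
  refine (Nat.card_eq_of_bijective (fun z => ?_) ⟨?_, ?_⟩).symm
  -- the function
  · rcases z with ⟨c, hc⟩ | ⟨c, hc⟩
    · refine ⟨πK c, ?_⟩
      obtain ⟨w, rfl⟩ := Quotient.exists_rep c
      rintro ⟨u, hu⟩
      have h : RG (σ.ιK w) u.val := RG.symm (Quotient.exact' hu)
      obtain ⟨w', hw', hr⟩ := σ.factK S hc h
      exact hc ⟨⟨w', show σ.ιK w' ∈ U by rw [← hw']; exact u.2⟩, Quotient.sound (RK.symm hr)⟩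
    · refine ⟨πH c, ?_⟩
      obtain ⟨w, rfl⟩ := Quotient.exists_rep c
      rintro ⟨u, hu⟩
      have h : RG (σ.ιH w) u.val := RG.symm (Quotient.exact' hu)
      obtain ⟨w', hw', hr⟩ := σ.factH S hc h
      exact hc ⟨⟨w', show σ.ιH w' ∈ U by rw [← hw']; exact u.2⟩, Quotient.sound (RH.symm hr)⟩
  -- injective
  · rintro (⟨c, hc⟩ | ⟨c, hc⟩) (⟨d, hd⟩ | ⟨d, hd⟩) hcd
    · obtain ⟨w, rfl⟩ := Quotient.exists_rep c
      obtain ⟨w', rfl⟩ := Quotient.exists_rep d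
      have h : RG (σ.ιK w) (σ.ιK w') := Quotient.exact' (congrArg Subtype.val hcd)
      obtain ⟨w'', hw'', hr⟩ := σ.factK S hc h
      have : w'' = w' := σ.injK hw''.symm
      exact congrArg Sum.inl (Subtype.ext (Quotient.sound (this ▸ hr)))
    · obtain ⟨w, rfl⟩ := Quotient.exists_rep c
      obtain ⟨w', rfl⟩ := Quotient.exists_rep d
      have h : RG (σ.ιK w) (σ.ιH w') := Quotient.exact' (congrArg Subtype.val hcd)
      obtain ⟨w'', hw'', hr⟩ := σ.factK S hc h
      have hU : σ.ιH w' ∈ U := σ.mem_U_of_ranges (hw'' ▸ ⟨w'', rfl⟩) ⟨w', rfl⟩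
      exact absurd ⟨⟨w', hU⟩, rfl⟩ hd
    · obtain ⟨w, rfl⟩ := Quotient.exists_rep c
      obtain ⟨w', rfl⟩ := Quotient.exists_rep d
      have h : RG (σ.ιH w) (σ.ιK w') := Quotient.exact' (congrArg Subtype.val hcd)
      obtain ⟨w'', hw'', hr⟩ := σ.factH S hc h
      have hU : σ.ιK w' ∈ U := σ.mem_U_of_ranges ⟨w', rfl⟩ (hw'' ▸ ⟨w'', rfl⟩)
      exact absurd ⟨⟨w', hU⟩, rfl⟩ hd
    · obtain ⟨w, rfl⟩ := Quotient.exists_rep c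
      obtain ⟨w', rfl⟩ := Quotient.exists_rep d
      have h : RG (σ.ιH w) (σ.ιH w') := Quotient.exact' (congrArg Subtype.val hcd)
      obtain ⟨w'', hw'', hr⟩ := σ.factH S hc h
      have : w'' = w' := σ.injH hw''.symm
      exact congrArg Sum.inr (Subtype.ext (Quotient.sound (this ▸ hr)))
  -- surjective
  · rintro ⟨d, hd⟩
    obtain ⟨x, rfl⟩ := Quotient.exists_rep d
    rcases σ.mem_ranges x with ⟨w, rfl⟩ | ⟨w, rfl⟩
    · have hc : (Quotient.mk RK w) ∉ Set.range (clsMap (σ.ιK ⁻¹' U) RK) := by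
        rintro ⟨u, hu⟩
        have h : RK u.val w := Quotient.exact' hu
        refine hd ⟨⟨σ.ιK u.val, u.2⟩, Quotient.sound (σ.cKr_le_RG S ⟨u.val, w, rfl, rfl, h⟩)⟩
      exact ⟨Sum.inl ⟨Quotient.mk RK w, hc⟩, Subtype.ext rfl⟩
    · have hc : (Quotient.mk RH w) ∉ Set.range (clsMap (σ.ιH ⁻¹' U) RH) := by
        rintro ⟨u, hu⟩
        have h : RH u.val w := Quotient.exact' hu
        refine hd ⟨⟨σ.ιH u.val, u.2⟩, Quotient.sound (σ.cHr_le_RG S ⟨u.val, w, rfl, rfl, h⟩)⟩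
      exact ⟨Sum.inr ⟨Quotient.mk RH w, hc⟩, Subtype.ext rfl⟩

lemma nblocks_AUs_eq :
    nblocks (AUs σ (Relation.EqvGen.setoid (K.rel (σ.SKf S)))) =
      nblocks (K.part (σ.ιK ⁻¹' U) (σ.SKf S)) := by
  have h1 : AUs σ (Relation.EqvGen.setoid (K.rel (σ.SKf S))) =
      Setoid.comap (⇑σ.eqK.symm) (K.part (σ.ιK ⁻¹' U) (σ.SKf S)) :=
    Setoid.ext fun _ _ => Iff.rfl
  rw [h1, nblocks_comap_equiv]

lemma nblocks_BUs_eq :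
    nblocks (BUs σ (Relation.EqvGen.setoid (H.rel (σ.SHf S)))) =
      nblocks (H.part (σ.ιH ⁻¹' U) (σ.SHf S)) := by
  have h1 : BUs σ (Relation.EqvGen.setoid (H.rel (σ.SHf S))) =
      Setoid.comap (⇑σ.eqH.symm) (H.part (σ.ιH ⁻¹' U) (σ.SHf S)) :=
    Setoid.ext fun _ _ => Iff.rfl
  rw [h1, nblocks_comap_equiv]

lemma split_omega :
    G.omega S +
        nblocks (AUs σ (Relation.EqvGen.setoid (K.rel (σ.SKf S)))) +
        nblocks (BUs σ (Relation.EqvGen.setoid (H.rel (σ.SHf S)))) =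
      K.omega (σ.SKf S) + H.omega (σ.SHf S) +
        nblocks (Js σ (Relation.EqvGen.setoid (K.rel (σ.SKf S)))
          (Relation.EqvGen.setoid (H.rel (σ.SHf S)))) := by
  have hG := cmu U (Relation.EqvGen.setoid (G.rel S))
  have hK := cmu (σ.ιK ⁻¹' U) (Relation.EqvGen.setoid (K.rel (σ.SKf S)))
  have hH := cmu (σ.ιH ⁻¹' U) (Relation.EqvGen.setoid (H.rel (σ.SHf S)))
  have hcomap := σ.comap_RG S
  rw [hcomap] at hG
  have hnm := σ.nonmeet_card S
  have hA := σ.nblocks_AUs_eq S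
  have hB := σ.nblocks_BUs_eq S
  show Nat.card (Quotient (Relation.EqvGen.setoid (G.rel S))) + _ + _ =
    Nat.card (Quotient (Relation.EqvGen.setoid (K.rel (σ.SKf S)))) +
    Nat.card (Quotient (Relation.EqvGen.setoid (H.rel (σ.SHf S)))) + _
  have hKpart : nblocks (Setoid.comap (Subtype.val : ↥(σ.ιK ⁻¹' U) → K.V)
      (Relation.EqvGen.setoid (K.rel (σ.SKf S)))) = nblocks (K.part (σ.ιK ⁻¹' U) (σ.SKf S)) :=
    rfl
  have hHpart : nblocks (Setoid.comap (Subtype.val : ↥(σ.ιH ⁻¹' U) → H.V)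
      (Relation.EqvGen.setoid (H.rel (σ.SHf S)))) = nblocks (H.part (σ.ιH ⁻¹' U) (σ.SHf S)) :=
    rfl
  omega

end NSum


namespace NSum
variable {G K H : Multigraph} {U : Set G.V}

lemma cardV (σ : NSum G K H U) :
    Nat.card G.V + Nat.card ↥U = Nat.card K.V + Nat.card H.V := by
  have h := Set.ncard_union_add_ncard_inter (Set.range σ.ιK) (Set.range σ.ιH)
  rw [σ.cover, σ.inter] at h
  have hK := Nat.card_range_of_injective σ.injK
  have hH := Nat.card_range_of_injective σ.injH
  rw [Nat.card_coe_set_eq] at hK hH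
  have hu : (Set.univ : Set G.V).ncard = Nat.card G.V := Set.ncard_univ _
  have hU : Nat.card ↥U = U.ncard := Nat.card_coe_set_eq U
  omega

lemma SKf_univ (σ : NSum G K H U) : σ.SKf Finset.univ = Finset.univ := by
  ext a; simp [SKf]

lemma SHf_univ (σ : NSum G K H U) : σ.SHf Finset.univ = Finset.univ := by
  ext b; simp [SHf]

lemma omegaG_one (σ : NSum G K H U) (hK : K.omegaG = 1) (hH : H.omegaG = 1) (hU : Nonempty ↥U) :
    G.omegaG = 1 := by
  have hs := σ.split_omega Finset.univ
  rw [σ.SKf_univ, σ.SHf_univ] at hs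
  set RK := Relation.EqvGen.setoid (K.rel (Finset.univ : Finset K.E))
  set RH := Relation.EqvGen.setoid (H.rel (Finset.univ : Finset H.E))
  have hA : nblocks (AUs σ RK) ≤ K.omegaG := nblocks_comap_le σ.uKmap RK
  have hB : nblocks (BUs σ RH) ≤ H.omegaG := nblocks_comap_le σ.uHmap RH
  have hJA : nblocks (Js σ RK RH) ≤ nblocks (AUs σ RK) := nblocks_le_of_le le_sup_left
  have hJpos : 0 < nblocks (Js σ RK RH) := by
    unfold nblocks
    rw [Nat.card_pos_iff]
    exact ⟨⟨Quotient.mk _ (Classical.arbitrary ↥U)⟩, inferInstance⟩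
  have hApos : 0 < nblocks (AUs σ RK) := by
    unfold nblocks
    rw [Nat.card_pos_iff]
    exact ⟨⟨Quotient.mk _ (Classical.arbitrary ↥U)⟩, inferInstance⟩
  have hBpos : 0 < nblocks (BUs σ RH) := by
    unfold nblocks
    rw [Nat.card_pos_iff]
    exact ⟨⟨Quotient.mk _ (Classical.arbitrary ↥U)⟩, inferInstance⟩
  have hKo : K.omegaG = K.omega Finset.univ := rfl
  have hHo : H.omegaG = H.omega Finset.univ := rfl
  show G.omega Finset.univ = 1
  omega

end NSum

namespace Multigraph

lemma tutte_one (G : Multigraph) (x : ℝ) :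
    G.tutte x 1 = ∑ S : Finset G.E,
      if G.omega S + S.card = Fintype.card G.V then
        (x - 1) ^ (G.omega S - G.omegaG) else 0 := by
  unfold Multigraph.tutte
  refine Finset.sum_congr rfl fun S _ => ?_
  have hfor := G.card_le_omega_add_card S
  by_cases h : G.omega S + S.card = Fintype.card G.V
  · rw [if_pos h]
    have h0 : G.omega S + S.card - Fintype.card G.V = 0 := by omega
    rw [h0, pow_zero, mul_one]
  · rw [if_neg h]
    have hpos : G.omega S + S.card - Fintype.card G.V ≠ 0 := by omega
    rw [show (1 : ℝ) - 1 = 0 by ring, zero_pow hpos, mul_zero]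

lemma tutteAux_one (K : Multigraph) (U' : Set K.V) (A : Setoid ↥U') (x : ℝ) :
    K.tutteAux U' A x 1 = ∑ S : Finset K.E,
      if K.part U' S = A ∧ K.omega S + S.card = Fintype.card K.V then
        (x - 1) ^ (K.omega S - nblocks A) else 0 := by
  unfold Multigraph.tutteAux
  refine Finset.sum_congr rfl fun S _ => ?_
  have hfor := K.card_le_omega_add_card S
  by_cases hp : K.part U' S = A
  · rw [if_pos hp]
    by_cases h : K.omega S + S.card = Fintype.card K.V
    · rw [if_pos ⟨hp, h⟩]
      have h0 : K.omega S + S.card - Fintype.card K.V = 0 := by omega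
      rw [h0, pow_zero, mul_one]
      rfl
    · rw [if_neg (fun hc => h hc.2)]
      have hpos : K.omega S + S.card - Fintype.card K.V ≠ 0 := by omega
      rw [show (1 : ℝ) - 1 = 0 by ring, zero_pow hpos, mul_zero]
  · rw [if_neg hp, if_neg (fun hc => hp hc.1)]

end Multigraph


lemma contract_tutte_expansion (K : Multigraph) (U' : Set K.V) (hconn : K.omegaG = 1)
    (hUne : Nonempty ↥U') (x : ℝ) (A : Setoid ↥U') :
    (K.contract A).tutte x 1 =
      ∑ P : Setoid ↥U',
        (if nblocks (P ⊔ A) + Nat.card ↥U' = nblocks P + nblocks A then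
          (x - 1) ^ (nblocks (P ⊔ A) - 1) else 0) * K.tutteAux U' P x 1 := by
  have hLHS : (K.contract A).tutte x 1 = ∑ S : Finset K.E,
      (if (K.contract A).omega S + S.card = Fintype.card (K.contract A).V then
        (x - 1) ^ ((K.contract A).omega S - (K.contract A).omegaG) else 0) :=
    Multigraph.tutte_one (K.contract A) x
  rw [hLHS]
  have hRHS : ∀ P : Setoid ↥U',
      (if nblocks (P ⊔ A) + Nat.card ↥U' = nblocks P + nblocks A then
          (x - 1) ^ (nblocks (P ⊔ A) - 1) else 0) * K.tutteAux U' P x 1 =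
        ∑ S : Finset K.E,
          (if nblocks (P ⊔ A) + Nat.card ↥U' = nblocks P + nblocks A then
            (x - 1) ^ (nblocks (P ⊔ A) - 1) else 0) *
          (if K.part U' S = P ∧ K.omega S + S.card = Fintype.card K.V then
            (x - 1) ^ (K.omega S - nblocks P) else 0) := by
    intro P
    rw [Multigraph.tutteAux_one, Finset.mul_sum]
  rw [Finset.sum_congr rfl fun P _ => hRHS P, Finset.sum_comm]
  refine Finset.sum_congr rfl fun S _ => ?_
  -- collapse inner sum over P to P = K.part U' S
  rw [Finset.sum_eq_single (K.part U' S)]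
  rotate_left
  · intro P _ hP
    have hz : (if K.part U' S = P ∧ K.omega S + S.card = Fintype.card K.V then
        (x - 1) ^ (K.omega S - nblocks P) else 0) = 0 := if_neg (fun hc => hP hc.1.symm)
    rw [hz, mul_zero]
  · intro h
    exact absurd (Finset.mem_univ _) h
  -- now the pointwise identity
  have f1 := contract_omega A S
  have f2 := contract_cardV A
  have f3 : (K.contract A).omegaG = 1 := contract_connected A hconn
  have f4 := K.nblocks_part_le U' S
  have f5 : 1 ≤ nblocks (K.part U' S ⊔ A) := by
    have : 0 < nblocks (K.part U' S ⊔ A) := by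
      unfold nblocks
      rw [Nat.card_pos_iff]
      exact ⟨⟨Quotient.mk _ (Classical.arbitrary ↥U')⟩, inferInstance⟩
    omega
  have f6 := nblocks_sup_add (K.part U' S) A
  have f7 := K.card_le_omega_add_card S
  have f8 := (K.contract A).card_le_omega_add_card S
  have c1 : Nat.card (K.contract A).V = Fintype.card (K.contract A).V :=
    Nat.card_eq_fintype_card
  have c2 : Nat.card K.V = Fintype.card K.V := Nat.card_eq_fintype_card
  rw [f3]
  by_cases hcond : nblocks (K.part U' S ⊔ A) + Nat.card ↥U' =
      nblocks (K.part U' S) + nblocks A ∧ K.omega S + S.card = Fintype.card K.V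
  · obtain ⟨hc1, hc2⟩ := hcond
    have hforC : (K.contract A).omega S + S.card = Fintype.card (K.contract A).V := by omega
    rw [if_pos hforC, if_pos hc1, if_pos ⟨rfl, hc2⟩, ← pow_add]
    congr 1
    omega
  · have hforC : ¬ ((K.contract A).omega S + S.card = Fintype.card (K.contract A).V) := by
      intro hc
      exact hcond (by constructor <;> omega)
    rw [if_neg hforC]
    rcases not_and_or.mp hcond with hc | hc
    · rw [if_neg hc, zero_mul]
    · have hz : (if K.part U' S = K.part U' S ∧ K.omega S + S.card = Fintype.card K.V then
          (x - 1) ^ (K.omega S - nblocks (K.part U' S)) else 0) = 0 :=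
        if_neg (fun hh => hc hh.2)
      rw [hz, mul_zero]


noncomputable def setoidEquiv {α β : Type} (e : β ≃ α) : Setoid α ≃ Setoid β where
  toFun s := Setoid.comap e s
  invFun t := Setoid.comap e.symm t
  left_inv s := Setoid.ext fun a b => by
    show s (e (e.symm a)) (e (e.symm b)) ↔ s a b
    rw [e.apply_symm_apply, e.apply_symm_apply]
  right_inv t := Setoid.ext fun a b => by
    show t (e.symm (e a)) (e.symm (e b)) ↔ t a b
    rw [e.symm_apply_apply, e.symm_apply_apply]

lemma sum4_swap {ι₁ ι₂ κ₁ κ₂ : Type} [Fintype ι₁] [Fintype ι₂] [Fintype κ₁] [Fintype κ₂]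
    (f : ι₁ → ι₂ → κ₁ → κ₂ → ℝ) :
    ∑ a : ι₁, ∑ b : ι₂, ∑ p : κ₁, ∑ q : κ₂, f a b p q =
      ∑ p : κ₁, ∑ q : κ₂, ∑ a : ι₁, ∑ b : ι₂, f a b p q := by
  calc ∑ a : ι₁, ∑ b : ι₂, ∑ p : κ₁, ∑ q : κ₂, f a b p q
      = ∑ a : ι₁, ∑ p : κ₁, ∑ b : ι₂, ∑ q : κ₂, f a b p q :=
        Finset.sum_congr rfl fun a _ => Finset.sum_comm
    _ = ∑ p : κ₁, ∑ a : ι₁, ∑ b : ι₂, ∑ q : κ₂, f a b p q := Finset.sum_comm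
    _ = ∑ p : κ₁, ∑ a : ι₁, ∑ q : κ₂, ∑ b : ι₂, f a b p q :=
        Finset.sum_congr rfl fun p _ => Finset.sum_congr rfl fun a _ => Finset.sum_comm
    _ = ∑ p : κ₁, ∑ q : κ₂, ∑ a : ι₁, ∑ b : ι₂, f a b p q :=
        Finset.sum_congr rfl fun p _ => Finset.sum_comm

namespace NSum
variable {G K H : Multigraph} {U : Set G.V}

noncomputable def A0 (σ : NSum G K H U) (P : Finset K.E) : Setoid ↥U :=
  Setoid.comap (⇑σ.eqK.symm) (K.part (σ.ιK ⁻¹' U) P)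

noncomputable def B0 (σ : NSum G K H U) (Q : Finset H.E) : Setoid ↥U :=
  Setoid.comap (⇑σ.eqH.symm) (H.part (σ.ιH ⁻¹' U) Q)

lemma Js_eq (σ : NSum G K H U) (RK : Setoid K.V) (RH : Setoid H.V) :
    Js σ RK RH = AUs σ RK ⊔ BUs σ RH := rfl

lemma A0_eq_AUs (σ : NSum G K H U) (P : Finset K.E) :
    σ.A0 P = AUs σ (Relation.EqvGen.setoid (K.rel P)) := Setoid.ext fun _ _ => Iff.rfl

lemma B0_eq_BUs (σ : NSum G K H U) (Q : Finset H.E) :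
    σ.B0 Q = BUs σ (Relation.EqvGen.setoid (H.rel Q)) := Setoid.ext fun _ _ => Iff.rfl

lemma pullK_A0 (σ : NSum G K H U) (P : Finset K.E) :
    σ.pullK (σ.A0 P) = K.part (σ.ιK ⁻¹' U) P := by
  rw [σ.pullK_eq]
  refine Setoid.ext fun a b => ?_
  show (K.part (σ.ιK ⁻¹' U) P) (σ.eqK.symm (σ.eqK a)) (σ.eqK.symm (σ.eqK b)) ↔ _
  rw [σ.eqK.symm_apply_apply, σ.eqK.symm_apply_apply]

lemma pullH_B0 (σ : NSum G K H U) (Q : Finset H.E) :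
    σ.pullH (σ.B0 Q) = H.part (σ.ιH ⁻¹' U) Q := by
  rw [σ.pullH_eq]
  refine Setoid.ext fun a b => ?_
  show (H.part (σ.ιH ⁻¹' U) Q) (σ.eqH.symm (σ.eqH a)) (σ.eqH.symm (σ.eqH b)) ↔ _
  rw [σ.eqH.symm_apply_apply, σ.eqH.symm_apply_apply]

lemma nblocks_A0 (σ : NSum G K H U) (P : Finset K.E) :
    nblocks (σ.A0 P) = nblocks (K.part (σ.ιK ⁻¹' U) P) :=
  nblocks_comap_equiv σ.eqK.symm _

lemma nblocks_B0 (σ : NSum G K H U) (Q : Finset H.E) :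
    nblocks (σ.B0 Q) = nblocks (H.part (σ.ιH ⁻¹' U) Q) :=
  nblocks_comap_equiv σ.eqH.symm _

lemma part_eq_pullK_iff (σ : NSum G K H U) (P : Finset K.E) (A : Setoid ↥U) :
    K.part (σ.ιK ⁻¹' U) P = σ.pullK A ↔ A = σ.A0 P := by
  constructor
  · intro h
    have h2 := congrArg (Setoid.comap (⇑σ.eqK.symm)) h
    rw [σ.pullK_eq] at h2
    have h3 : Setoid.comap (⇑σ.eqK.symm) (Setoid.comap (⇑σ.eqK) A) = A :=
      Setoid.ext fun a b => by
        show A (σ.eqK (σ.eqK.symm a)) (σ.eqK (σ.eqK.symm b)) ↔ A a b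
        rw [σ.eqK.apply_symm_apply, σ.eqK.apply_symm_apply]
    rw [h3] at h2
    exact h2.symm
  · rintro rfl
    exact (σ.pullK_A0 P).symm

lemma part_eq_pullH_iff (σ : NSum G K H U) (Q : Finset H.E) (B : Setoid ↥U) :
    H.part (σ.ιH ⁻¹' U) Q = σ.pullH B ↔ B = σ.B0 Q := by
  constructor
  · intro h
    have h2 := congrArg (Setoid.comap (⇑σ.eqH.symm)) h
    rw [σ.pullH_eq] at h2
    have h3 : Setoid.comap (⇑σ.eqH.symm) (Setoid.comap (⇑σ.eqH) B) = B :=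
      Setoid.ext fun a b => by
        show B (σ.eqH (σ.eqH.symm a)) (σ.eqH (σ.eqH.symm b)) ↔ B a b
        rw [σ.eqH.apply_symm_apply, σ.eqH.apply_symm_apply]
    rw [h3] at h2
    exact h2.symm
  · rintro rfl
    exact (σ.pullH_B0 Q).symm

lemma nblocks_pullK (σ : NSum G K H U) (A : Setoid ↥U) :
    nblocks (σ.pullK A) = nblocks A := by
  rw [σ.pullK_eq]
  exact nblocks_comap_equiv σ.eqK A

lemma nblocks_pullH (σ : NSum G K H U) (B : Setoid ↥U) :
    nblocks (σ.pullH B) = nblocks B := by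
  rw [σ.pullH_eq]
  exact nblocks_comap_equiv σ.eqH B

lemma split_tutte (σ : NSum G K H U) (hK : K.omegaG = 1) (hH : H.omegaG = 1)
    (hUne : Nonempty ↥U) (x : ℝ) :
    G.tutte x 1 = ∑ A : Setoid ↥U, ∑ B : Setoid ↥U,
      K.tutteAux (σ.ιK ⁻¹' U) (σ.pullK A) x 1 *
      (if nblocks (A ⊔ B) + Nat.card ↥U = nblocks A + nblocks B then
        (x - 1) ^ (nblocks (A ⊔ B) - 1) else 0) *
      H.tutteAux (σ.ιH ⁻¹' U) (σ.pullH B) x 1 := by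
  classical
  -- abbreviations
  set n' := Nat.card ↥U with hn'
  -- Step R: collapse the right-hand side to a (P, Q)-indexed sum
  have stepR : (∑ A : Setoid ↥U, ∑ B : Setoid ↥U,
      K.tutteAux (σ.ιK ⁻¹' U) (σ.pullK A) x 1 *
      (if nblocks (A ⊔ B) + n' = nblocks A + nblocks B then
        (x - 1) ^ (nblocks (A ⊔ B) - 1) else 0) *
      H.tutteAux (σ.ιH ⁻¹' U) (σ.pullH B) x 1) =
      ∑ P : Finset K.E, ∑ Q : Finset H.E,
        (if K.part (σ.ιK ⁻¹' U) P = σ.pullK (σ.A0 P) ∧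
            K.omega P + P.card = Fintype.card K.V then
          (x - 1) ^ (K.omega P - nblocks (σ.pullK (σ.A0 P))) else 0) *
        (if nblocks (σ.A0 P ⊔ σ.B0 Q) + n' = nblocks (σ.A0 P) + nblocks (σ.B0 Q) then
          (x - 1) ^ (nblocks (σ.A0 P ⊔ σ.B0 Q) - 1) else 0) *
        (if H.part (σ.ιH ⁻¹' U) Q = σ.pullH (σ.B0 Q) ∧
            H.omega Q + Q.card = Fintype.card H.V then
          (x - 1) ^ (H.omega Q - nblocks (σ.pullH (σ.B0 Q))) else 0) := by
    have expand : ∀ A B : Setoid ↥U,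
        K.tutteAux (σ.ιK ⁻¹' U) (σ.pullK A) x 1 *
        (if nblocks (A ⊔ B) + n' = nblocks A + nblocks B then
          (x - 1) ^ (nblocks (A ⊔ B) - 1) else 0) *
        H.tutteAux (σ.ιH ⁻¹' U) (σ.pullH B) x 1 =
        ∑ P : Finset K.E, ∑ Q : Finset H.E,
          (if K.part (σ.ιK ⁻¹' U) P = σ.pullK A ∧
              K.omega P + P.card = Fintype.card K.V then
            (x - 1) ^ (K.omega P - nblocks (σ.pullK A)) else 0) *
          (if nblocks (A ⊔ B) + n' = nblocks A + nblocks B then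
            (x - 1) ^ (nblocks (A ⊔ B) - 1) else 0) *
          (if H.part (σ.ιH ⁻¹' U) Q = σ.pullH B ∧
              H.omega Q + Q.card = Fintype.card H.V then
            (x - 1) ^ (H.omega Q - nblocks (σ.pullH B)) else 0) := by
      intro A B
      rw [Multigraph.tutteAux_one K (σ.ιK ⁻¹' U) (σ.pullK A) x,
        Multigraph.tutteAux_one H (σ.ιH ⁻¹' U) (σ.pullH B) x,
        Finset.sum_mul, Finset.sum_mul_sum]
    rw [Finset.sum_congr rfl fun A _ => Finset.sum_congr rfl fun B _ => expand A B]
    rw [sum4_swap]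
    refine Finset.sum_congr rfl fun P _ => Finset.sum_congr rfl fun Q _ => ?_
    have hz1 : ∀ A ∈ (Finset.univ : Finset (Setoid ↥U)), A ≠ σ.A0 P →
        (∑ B : Setoid ↥U,
          (if K.part (σ.ιK ⁻¹' U) P = σ.pullK A ∧
              K.omega P + P.card = Fintype.card K.V then
            (x - 1) ^ (K.omega P - nblocks (σ.pullK A)) else 0) *
          (if nblocks (A ⊔ B) + n' = nblocks A + nblocks B then
            (x - 1) ^ (nblocks (A ⊔ B) - 1) else 0) *
          (if H.part (σ.ιH ⁻¹' U) Q = σ.pullH B ∧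
              H.omega Q + Q.card = Fintype.card H.V then
            (x - 1) ^ (H.omega Q - nblocks (σ.pullH B)) else 0)) = 0 := by
      intro A _ hA
      refine Finset.sum_eq_zero fun B _ => ?_
      have hz : (if K.part (σ.ιK ⁻¹' U) P = σ.pullK A ∧
          K.omega P + P.card = Fintype.card K.V then
          (x - 1) ^ (K.omega P - nblocks (σ.pullK A)) else 0) = 0 :=
        if_neg (fun hc => hA ((σ.part_eq_pullK_iff P A).mp hc.1))
      rw [hz, zero_mul, zero_mul]
    rw [Finset.sum_eq_single (σ.A0 P) hz1 (fun h => absurd (Finset.mem_univ _) h)]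
    have hz3 : ∀ B ∈ (Finset.univ : Finset (Setoid ↥U)), B ≠ σ.B0 Q →
        ((if K.part (σ.ιK ⁻¹' U) P = σ.pullK (σ.A0 P) ∧
            K.omega P + P.card = Fintype.card K.V then
          (x - 1) ^ (K.omega P - nblocks (σ.pullK (σ.A0 P))) else 0) *
        (if nblocks (σ.A0 P ⊔ B) + n' = nblocks (σ.A0 P) + nblocks B then
          (x - 1) ^ (nblocks (σ.A0 P ⊔ B) - 1) else 0) *
        (if H.part (σ.ιH ⁻¹' U) Q = σ.pullH B ∧
            H.omega Q + Q.card = Fintype.card H.V then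
          (x - 1) ^ (H.omega Q - nblocks (σ.pullH B)) else 0)) = 0 := by
      intro B _ hB
      have hz : (if H.part (σ.ιH ⁻¹' U) Q = σ.pullH B ∧
          H.omega Q + Q.card = Fintype.card H.V then
          (x - 1) ^ (H.omega Q - nblocks (σ.pullH B)) else 0) = 0 :=
        if_neg (fun hc => hB ((σ.part_eq_pullH_iff Q B).mp hc.1))
      rw [hz, mul_zero]
    rw [Finset.sum_eq_single (σ.B0 Q) hz3 (fun h => absurd (Finset.mem_univ _) h)]
  rw [stepR]
  -- Step L: expand the left-hand side over (P, Q)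
  rw [Multigraph.tutte_one, σ.omegaG_one hK hH hUne]
  have hbij : Function.Bijective
      (fun PQ : Finset K.E × Finset H.E => σ.coF PQ.1 PQ.2) := by
    rw [Function.bijective_iff_has_inverse]
    refine ⟨fun S => (σ.SKf S, σ.SHf S), fun PQ => ?_, fun S => σ.coF_SKf_SHf S⟩
    exact Prod.ext (σ.SKf_coF PQ.1 PQ.2) (σ.SHf_coF PQ.1 PQ.2)
  rw [← Fintype.sum_bijective _ hbij
    (fun PQ : Finset K.E × Finset H.E =>
      if G.omega (σ.coF PQ.1 PQ.2) + (σ.coF PQ.1 PQ.2).card = Fintype.card G.V then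
        (x - 1) ^ (G.omega (σ.coF PQ.1 PQ.2) - 1) else 0)
    _ (fun PQ => rfl), Fintype.sum_prod_type]
  refine Finset.sum_congr rfl fun P _ => Finset.sum_congr rfl fun Q _ => ?_
  -- pointwise identity
  show (if G.omega (σ.coF P Q) + (σ.coF P Q).card = Fintype.card G.V then
      (x - 1) ^ (G.omega (σ.coF P Q) - 1) else 0) = _
  have hso := σ.split_omega (σ.coF P Q)
  rw [σ.SKf_coF P Q, σ.SHf_coF P Q, Js_eq, ← σ.A0_eq_AUs, ← σ.B0_eq_BUs] at hso
  have hcards := σ.card_SKf_SHf (σ.coF P Q)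
  rw [σ.SKf_coF P Q, σ.SHf_coF P Q] at hcards
  have hV := σ.cardV
  have fG := G.card_le_omega_add_card (σ.coF P Q)
  have fK := K.card_le_omega_add_card P
  have fH := H.card_le_omega_add_card Q
  have gA : nblocks (σ.A0 P) ≤ K.omega P := by
    rw [σ.A0_eq_AUs]
    exact nblocks_comap_le σ.uKmap _
  have gB : nblocks (σ.B0 Q) ≤ H.omega Q := by
    rw [σ.B0_eq_BUs]
    exact nblocks_comap_le σ.uHmap _
  have gJ : 1 ≤ nblocks (σ.A0 P ⊔ σ.B0 Q) := by
    have : 0 < nblocks (σ.A0 P ⊔ σ.B0 Q) := by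
      unfold nblocks
      rw [Nat.card_pos_iff]
      exact ⟨⟨Quotient.mk _ (Classical.arbitrary ↥U)⟩, inferInstance⟩
    omega
  have gS := nblocks_sup_add (σ.A0 P) (σ.B0 Q)
  have c1 : Nat.card G.V = Fintype.card G.V := Nat.card_eq_fintype_card
  have c2 : Nat.card K.V = Fintype.card K.V := Nat.card_eq_fintype_card
  have c3 : Nat.card H.V = Fintype.card H.V := Nat.card_eq_fintype_card
  rw [σ.pullK_A0 P, σ.pullH_B0 Q, ← σ.nblocks_A0 P, ← σ.nblocks_B0 Q]
  by_cases cK : K.omega P + P.card = Fintype.card K.V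
  · by_cases cH : H.omega Q + Q.card = Fintype.card H.V
    · by_cases cL : nblocks (σ.A0 P ⊔ σ.B0 Q) + n' = nblocks (σ.A0 P) + nblocks (σ.B0 Q)
      · have cG : G.omega (σ.coF P Q) + (σ.coF P Q).card = Fintype.card G.V := by omega
        rw [if_pos cG, if_pos ⟨rfl, cK⟩, if_pos cL, if_pos ⟨rfl, cH⟩, ← pow_add, ← pow_add]
        congr 1
        omega
      · have cG : ¬ (G.omega (σ.coF P Q) + (σ.coF P Q).card = Fintype.card G.V) := by
          intro hc
          exact cL (by omega)
        rw [if_neg cG, if_neg cL, mul_zero, zero_mul]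
    · have cG : ¬ (G.omega (σ.coF P Q) + (σ.coF P Q).card = Fintype.card G.V) := by
        intro hc
        exact cH (by omega)
      have hz : (if H.part (σ.ιH ⁻¹' U) Q = H.part (σ.ιH ⁻¹' U) Q ∧
          H.omega Q + Q.card = Fintype.card H.V then
          (x - 1) ^ (H.omega Q - nblocks (σ.B0 Q)) else 0) = 0 :=
        if_neg (fun hc => cH hc.2)
      rw [if_neg cG, hz, mul_zero]
  · have cG : ¬ (G.omega (σ.coF P Q) + (σ.coF P Q).card = Fintype.card G.V) := by
      intro hc
      exact cK (by omega)
    have hz : (if K.part (σ.ιK ⁻¹' U) P = K.part (σ.ιK ⁻¹' U) P ∧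
        K.omega P + P.card = Fintype.card K.V then
        (x - 1) ^ (K.omega P - nblocks (σ.A0 P)) else 0) = 0 :=
      if_neg (fun hc => cK hc.2)
    rw [if_neg cG, hz, zero_mul, zero_mul]

end NSum


lemma Lmat_symm (α : Type) [Finite α] (n : ℕ) (x : ℝ) (A B : Setoid α) :
    Lmat α n x A B = Lmat α n x B A := by
  simp only [Lmat, Matrix.of_apply]
  rw [sup_comm, Nat.add_comm (nblocks A)]

namespace NSum
variable {G K H : Multigraph} {U : Set G.V}

lemma contractK_expansion (σ : NSum G K H U) (hK : K.omegaG = 1) (hUne : Nonempty ↥U)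
    (x : ℝ) (A : Setoid ↥U) :
    (σ.contractK A).tutte x 1 = ∑ P : Setoid ↥U,
      (if nblocks (P ⊔ A) + Nat.card ↥U = nblocks P + nblocks A then
        (x - 1) ^ (nblocks (P ⊔ A) - 1) else 0) *
      K.tutteAux (σ.ιK ⁻¹' U) (σ.pullK P) x 1 := by
  have hUKne : Nonempty ↥(σ.ιK ⁻¹' U) := ⟨σ.eqK.symm (Classical.arbitrary ↥U)⟩
  have h := contract_tutte_expansion K (σ.ιK ⁻¹' U) hK hUKne x (σ.pullK A)
  rw [show σ.contractK A = K.contract (σ.pullK A) from rfl, h]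
  refine (Fintype.sum_bijective (fun P : Setoid ↥U => σ.pullK P)
    ((setoidEquiv σ.eqK).bijective) _ _ fun P => ?_).symm
  have hsup : σ.pullK P ⊔ σ.pullK A = σ.pullK (P ⊔ A) := by
    rw [σ.pullK_eq, σ.pullK_eq, σ.pullK_eq, ← comap_equiv_sup]
  have hcardU : Nat.card ↥(σ.ιK ⁻¹' U) = Nat.card ↥U := Nat.card_congr σ.eqK
  rw [hsup, σ.nblocks_pullK (P ⊔ A), σ.nblocks_pullK P, σ.nblocks_pullK A, hcardU]

lemma contractH_expansion (σ : NSum G K H U) (hH : H.omegaG = 1) (hUne : Nonempty ↥U)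
    (x : ℝ) (B : Setoid ↥U) :
    (σ.contractH B).tutte x 1 = ∑ Q : Setoid ↥U,
      (if nblocks (Q ⊔ B) + Nat.card ↥U = nblocks Q + nblocks B then
        (x - 1) ^ (nblocks (Q ⊔ B) - 1) else 0) *
      H.tutteAux (σ.ιH ⁻¹' U) (σ.pullH Q) x 1 := by
  have hUHne : Nonempty ↥(σ.ιH ⁻¹' U) := ⟨σ.eqH.symm (Classical.arbitrary ↥U)⟩
  have h := contract_tutte_expansion H (σ.ιH ⁻¹' U) hH hUHne x (σ.pullH B)
  rw [show σ.contractH B = H.contract (σ.pullH B) from rfl, h]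
  refine (Fintype.sum_bijective (fun Q : Setoid ↥U => σ.pullH Q)
    ((setoidEquiv σ.eqH).bijective) _ _ fun Q => ?_).symm
  have hsup : σ.pullH Q ⊔ σ.pullH B = σ.pullH (Q ⊔ B) := by
    rw [σ.pullH_eq, σ.pullH_eq, σ.pullH_eq, ← comap_equiv_sup]
  have hcardU : Nat.card ↥(σ.ιH ⁻¹' U) = Nat.card ↥U := Nat.card_congr σ.eqH
  rw [hsup, σ.nblocks_pullH (Q ⊔ B), σ.nblocks_pullH Q, σ.nblocks_pullH B, hcardU]

end NSum


/-- the splitting formula for `T(G;x,1)` of an `n`-sum of connected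
multigraphs, for any generalized inverse `D` of `L_n(x)`. -/
theorem tutte_splitting_formula_y_eq_one
    (G K H : Multigraph) (U : Set G.V) (n : ℕ) (hn : 1 ≤ n)
    (sg : NSum G K H U) (hU : Nat.card ↥U = n)
    (hK : K.omegaG = 1) (hH : H.omegaG = 1) (x : ℝ)
    (D : Matrix (Setoid ↥U) (Setoid ↥U) ℝ)
    (hD : Lmat ↥U n x * D * Lmat ↥U n x = Lmat ↥U n x) :
    G.tutte x 1 =
      ∑ A : Setoid ↥U, ∑ B : Setoid ↥U,
        D A B * (sg.contractK A).tutte x 1 * (sg.contractH B).tutte x 1 := by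
  classical
  subst hU
  have hUne : Nonempty ↥U := by
    have hpos : 0 < Nat.card ↥U := by omega
    exact (Nat.card_pos_iff.mp hpos).1
  have main : (∑ A : Setoid ↥U, ∑ B : Setoid ↥U,
      D A B * (sg.contractK A).tutte x 1 * (sg.contractH B).tutte x 1) =
      ∑ A : Setoid ↥U, ∑ B : Setoid ↥U,
        K.tutteAux (sg.ιK ⁻¹' U) (sg.pullK A) x 1 *
        (if nblocks (A ⊔ B) + Nat.card ↥U = nblocks A + nblocks B then
          (x - 1) ^ (nblocks (A ⊔ B) - 1) else 0) *
        H.tutteAux (sg.ιH ⁻¹' U) (sg.pullH B) x 1 := by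
    have hexp : ∀ A B : Setoid ↥U,
        D A B * (sg.contractK A).tutte x 1 * (sg.contractH B).tutte x 1 =
        ∑ P : Setoid ↥U, ∑ Q : Setoid ↥U,
          D A B *
            ((if nblocks (P ⊔ A) + Nat.card ↥U = nblocks P + nblocks A then
              (x - 1) ^ (nblocks (P ⊔ A) - 1) else 0) *
              K.tutteAux (sg.ιK ⁻¹' U) (sg.pullK P) x 1) *
            ((if nblocks (Q ⊔ B) + Nat.card ↥U = nblocks Q + nblocks B then
              (x - 1) ^ (nblocks (Q ⊔ B) - 1) else 0) *
              H.tutteAux (sg.ιH ⁻¹' U) (sg.pullH Q) x 1) := by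
      intro A B
      rw [sg.contractK_expansion hK hUne x A, sg.contractH_expansion hH hUne x B]
      have h1 : D A B * (∑ P : Setoid ↥U,
          (if nblocks (P ⊔ A) + Nat.card ↥U = nblocks P + nblocks A then
            (x - 1) ^ (nblocks (P ⊔ A) - 1) else 0) *
            K.tutteAux (sg.ιK ⁻¹' U) (sg.pullK P) x 1) =
          ∑ P : Setoid ↥U, D A B *
            ((if nblocks (P ⊔ A) + Nat.card ↥U = nblocks P + nblocks A then
              (x - 1) ^ (nblocks (P ⊔ A) - 1) else 0) *
              K.tutteAux (sg.ιK ⁻¹' U) (sg.pullK P) x 1) := Finset.mul_sum _ _ _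
      rw [h1, Finset.sum_mul_sum]
    rw [Finset.sum_congr rfl fun A _ => Finset.sum_congr rfl fun B _ => hexp A B,
      sum4_swap]
    refine Finset.sum_congr rfl fun P _ => Finset.sum_congr rfl fun Q _ => ?_
    have hterm : ∀ A B : Setoid ↥U,
        D A B *
          ((if nblocks (P ⊔ A) + Nat.card ↥U = nblocks P + nblocks A then
            (x - 1) ^ (nblocks (P ⊔ A) - 1) else 0) *
            K.tutteAux (sg.ιK ⁻¹' U) (sg.pullK P) x 1) *
          ((if nblocks (Q ⊔ B) + Nat.card ↥U = nblocks Q + nblocks B then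
            (x - 1) ^ (nblocks (Q ⊔ B) - 1) else 0) *
            H.tutteAux (sg.ιH ⁻¹' U) (sg.pullH Q) x 1) =
        Lmat ↥U (Nat.card ↥U) x P A * D A B * Lmat ↥U (Nat.card ↥U) x B Q *
          (K.tutteAux (sg.ιK ⁻¹' U) (sg.pullK P) x 1 *
            H.tutteAux (sg.ιH ⁻¹' U) (sg.pullH Q) x 1) := by
      intro A B
      have e1 : (if nblocks (P ⊔ A) + Nat.card ↥U = nblocks P + nblocks A then
          (x - 1) ^ (nblocks (P ⊔ A) - 1) else 0) = Lmat ↥U (Nat.card ↥U) x P A := rfl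
      have e2 : (if nblocks (Q ⊔ B) + Nat.card ↥U = nblocks Q + nblocks B then
          (x - 1) ^ (nblocks (Q ⊔ B) - 1) else 0) = Lmat ↥U (Nat.card ↥U) x Q B := rfl
      rw [e1, e2, Lmat_symm ↥U (Nat.card ↥U) x Q B]
      ring
    rw [Finset.sum_congr rfl fun A _ => Finset.sum_congr rfl fun B _ => hterm A B]
    rw [Finset.sum_congr rfl fun A (_ : A ∈ Finset.univ) =>
      (Finset.sum_mul Finset.univ
        (fun B => Lmat ↥U (Nat.card ↥U) x P A * D A B * Lmat ↥U (Nat.card ↥U) x B Q)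
        (K.tutteAux (sg.ιK ⁻¹' U) (sg.pullK P) x 1 *
          H.tutteAux (sg.ιH ⁻¹' U) (sg.pullH Q) x 1)).symm]
    rw [(Finset.sum_mul Finset.univ
      (fun A => ∑ B : Setoid ↥U,
        Lmat ↥U (Nat.card ↥U) x P A * D A B * Lmat ↥U (Nat.card ↥U) x B Q)
      (K.tutteAux (sg.ιK ⁻¹' U) (sg.pullK P) x 1 *
        H.tutteAux (sg.ιH ⁻¹' U) (sg.pullH Q) x 1)).symm]
    have hDpq : (∑ B' : Setoid ↥U,
        (∑ A' : Setoid ↥U, Lmat ↥U (Nat.card ↥U) x P A' * D A' B') *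
          Lmat ↥U (Nat.card ↥U) x B' Q) = Lmat ↥U (Nat.card ↥U) x P Q := by
      have h := congrFun (congrFun hD P) Q
      simpa only [Matrix.mul_apply] using h
    have key : (∑ A : Setoid ↥U, ∑ B : Setoid ↥U,
        Lmat ↥U (Nat.card ↥U) x P A * D A B * Lmat ↥U (Nat.card ↥U) x B Q) =
        Lmat ↥U (Nat.card ↥U) x P Q := by
      rw [Finset.sum_comm]
      rw [Finset.sum_congr rfl fun B' (_ : B' ∈ Finset.univ) =>
        (Finset.sum_mul Finset.univ
          (fun A' => Lmat ↥U (Nat.card ↥U) x P A' * D A' B')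
          (Lmat ↥U (Nat.card ↥U) x B' Q)).symm]
      exact hDpq
    rw [key]
    have e3 : (if nblocks (P ⊔ Q) + Nat.card ↥U = nblocks P + nblocks Q then
        (x - 1) ^ (nblocks (P ⊔ Q) - 1) else 0) = Lmat ↥U (Nat.card ↥U) x P Q := rfl
    rw [e3]
    ring
  rw [sg.split_tutte hK hH hUne x]
  exact main.symm
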